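/- arXiv:2306.13245 — 6 statements merged into one kernel-verified Lean document; each statement's English description precedes it below -/
import Mathlib

section
/- Let f = (f11, f12, f22) ∈ C²_c(S²; D1). Then for every x ∈ ℝ², (f11 + f22)(x) = (1/(2 u2)) · D_u D_v F (x), where F(y) = ∫₀^∞ (Lf + Tf)(y + t e2) dt. (Recovery of the trace of a symmetric 2-tensor field from its longitudinal and transverse V-line transforms.) -/
noncomputable section

open MeasureTheory

/-- The divergent beam transform `X_w h (x) = ∫₀^∞ h(x + t w) dt`. -/
def Xbeam (w : ℝ × ℝ) (h : ℝ × ℝ → ℝ) (x : ℝ × ℝ) : ℝ :=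
  ∫ t in Set.Ioi (0 : ℝ), h (x + t • w)

/-- The k-th moment divergent beam transform `X_w^k h (x) = ∫₀^∞ t^k h(x + t w) dt`. -/
def Xmom (k : ℕ) (w : ℝ × ℝ) (h : ℝ × ℝ → ℝ) (x : ℝ × ℝ) : ℝ :=
  ∫ t in Set.Ioi (0 : ℝ), t ^ k * h (x + t • w)

/-- The directional derivative `D_w h = w ⋅ ∇h`. -/
def Dir (w : ℝ × ℝ) (h : ℝ × ℝ → ℝ) (x : ℝ × ℝ) : ℝ :=
  fderiv ℝ h x w

/-- Support contained in the open unit disc `D1`. -/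
def SuppInDisc (h : ℝ × ℝ → ℝ) : Prop :=
  ∀ x : ℝ × ℝ, 1 ≤ x.1 ^ 2 + x.2 ^ 2 → h x = 0

/-- The longitudinal V-line transform. -/
def VlineL (u1 u2 : ℝ) (f11 f12 f22 : ℝ × ℝ → ℝ) : ℝ × ℝ → ℝ :=
  Xbeam (u1, u2) (fun y => u1 ^ 2 * f11 y + 2 * u1 * u2 * f12 y + u2 ^ 2 * f22 y)
    + Xbeam (-u1, u2) (fun y => u1 ^ 2 * f11 y - 2 * u1 * u2 * f12 y + u2 ^ 2 * f22 y)

/-- The transverse V-line transform. -/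
def VlineT (u1 u2 : ℝ) (f11 f12 f22 : ℝ × ℝ → ℝ) : ℝ × ℝ → ℝ :=
  Xbeam (u1, u2) (fun y => u2 ^ 2 * f11 y - 2 * u1 * u2 * f12 y + u1 ^ 2 * f22 y)
    + Xbeam (-u1, u2) (fun y => u2 ^ 2 * f11 y + 2 * u1 * u2 * f12 y + u1 ^ 2 * f22 y)

/-- The mixed V-line transform. -/
def VlineM (u1 u2 : ℝ) (f11 f12 f22 : ℝ × ℝ → ℝ) : ℝ × ℝ → ℝ :=
  Xbeam (u1, u2) (fun y => -(u1 * u2) * f11 y + (u1 ^ 2 - u2 ^ 2) * f12 y + u1 * u2 * f22 y)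
    + Xbeam (-u1, u2) (fun y => u1 * u2 * f11 y + (u1 ^ 2 - u2 ^ 2) * f12 y - u1 * u2 * f22 y)

/-- The k-th moment longitudinal V-line transform. -/
def VlineLk (k : ℕ) (u1 u2 : ℝ) (f11 f12 f22 : ℝ × ℝ → ℝ) : ℝ × ℝ → ℝ :=
  Xmom k (u1, u2) (fun y => u1 ^ 2 * f11 y + 2 * u1 * u2 * f12 y + u2 ^ 2 * f22 y)
    + Xmom k (-u1, u2) (fun y => u1 ^ 2 * f11 y - 2 * u1 * u2 * f12 y + u2 ^ 2 * f22 y)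

/-- The k-th moment transverse V-line transform. -/
def VlineTk (k : ℕ) (u1 u2 : ℝ) (f11 f12 f22 : ℝ × ℝ → ℝ) : ℝ × ℝ → ℝ :=
  Xmom k (u1, u2) (fun y => u2 ^ 2 * f11 y - 2 * u1 * u2 * f12 y + u1 ^ 2 * f22 y)
    + Xmom k (-u1, u2) (fun y => u2 ^ 2 * f11 y + 2 * u1 * u2 * f12 y + u1 ^ 2 * f22 y)

/-- The k-th moment mixed V-line transform. -/
def VlineMk (k : ℕ) (u1 u2 : ℝ) (f11 f12 f22 : ℝ × ℝ → ℝ) : ℝ × ℝ → ℝ :=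
  Xmom k (u1, u2) (fun y => -(u1 * u2) * f11 y + (u1 ^ 2 - u2 ^ 2) * f12 y + u1 * u2 * f22 y)
    + Xmom k (-u1, u2) (fun y => u1 * u2 * f11 y + (u1 ^ 2 - u2 ^ 2) * f12 y - u1 * u2 * f22 y)

namespace TraceAux

open Set Metric Filter

lemma slab_of_disc {h : ℝ × ℝ → ℝ} (hs : SuppInDisc h) {z : ℝ × ℝ} (hz : 1 ≤ |z.2|) :
    h z = 0 := by
  apply hs
  nlinarith [sq_nonneg z.1, sq_abs z.2, abs_nonneg z.2]

lemma fderiv_zero_of_closure {h : ℝ × ℝ → ℝ} (hc : ContDiff ℝ 1 h) {S : Set (ℝ × ℝ)}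
    (hS : IsOpen S) (h0 : ∀ p ∈ S, h p = 0) {z : ℝ × ℝ} (hz : z ∈ closure S) :
    fderiv ℝ h z = 0 := by
  have hzero : ∀ p ∈ S, fderiv ℝ h p = (0 : (ℝ × ℝ) →L[ℝ] ℝ) := by
    intro p hp
    have he : h =ᶠ[nhds p] (fun _ => (0 : ℝ)) :=
      Filter.eventually_of_mem (hS.mem_nhds hp) h0
    rw [he.fderiv_eq, fderiv_fun_const]
    rfl
  have hcont : Continuous (fderiv ℝ h) := hc.continuous_fderiv one_ne_zero
  haveI : (nhdsWithin z S).NeBot := mem_closure_iff_nhdsWithin_neBot.mp hz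
  have h1 : Filter.Tendsto (fderiv ℝ h) (nhdsWithin z S) (nhds (fderiv ℝ h z)) :=
    (hcont.tendsto z).mono_left nhdsWithin_le_nhds
  have h2 : Filter.Tendsto (fderiv ℝ h) (nhdsWithin z S) (nhds 0) := by
    apply Filter.Tendsto.congr' _ tendsto_const_nhds
    filter_upwards [self_mem_nhdsWithin] with p hp
    exact (hzero p hp).symm
  exact tendsto_nhds_unique h1 h2

lemma fderiv_disc {h : ℝ × ℝ → ℝ} (hc : ContDiff ℝ 1 h) (hs : SuppInDisc h)
    {z : ℝ × ℝ} (hz : 1 ≤ z.1 ^ 2 + z.2 ^ 2) : fderiv ℝ h z = 0 := by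
  have hS : IsOpen {p : ℝ × ℝ | 1 < p.1 ^ 2 + p.2 ^ 2} := by
    have : Continuous fun p : ℝ × ℝ => p.1 ^ 2 + p.2 ^ 2 := by continuity
    exact isOpen_lt continuous_const this
  apply fderiv_zero_of_closure hc hS (fun p hp => hs p (le_of_lt hp))
  apply mem_closure_iff_seq_limit.mpr
  refine ⟨fun n => (1 + 1 / (n + 1 : ℝ)) • z, fun n => ?_, ?_⟩
  · have hn : (0 : ℝ) < 1 / (n + 1 : ℝ) := by positivity
    show 1 < ((1 + 1 / (n + 1 : ℝ)) • z).1 ^ 2 + ((1 + 1 / (n + 1 : ℝ)) • z).2 ^ 2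
    have h1 : ((1 + 1 / (n + 1 : ℝ)) • z).1 = (1 + 1 / (n + 1 : ℝ)) * z.1 := rfl
    have h2 : ((1 + 1 / (n + 1 : ℝ)) • z).2 = (1 + 1 / (n + 1 : ℝ)) * z.2 := rfl
    rw [h1, h2]
    have hε : (1 : ℝ) < (1 + 1 / (n + 1 : ℝ)) ^ 2 := by nlinarith
    calc (1 : ℝ) < (1 + 1 / (n + 1 : ℝ)) ^ 2 := hε
      _ ≤ (1 + 1 / (n + 1 : ℝ)) ^ 2 * (z.1 ^ 2 + z.2 ^ 2) := by nlinarith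
      _ = ((1 + 1 / (n + 1 : ℝ)) * z.1) ^ 2 + ((1 + 1 / (n + 1 : ℝ)) * z.2) ^ 2 := by ring
  · have : Filter.Tendsto (fun n : ℕ => 1 + 1 / (n + 1 : ℝ)) atTop (nhds 1) := by
      have := tendsto_one_div_add_atTop_nhds_zero_nat (𝕜 := ℝ)
      simpa using tendsto_const_nhds.add this
    simpa using this.smul_const z

lemma fderiv_slab {h : ℝ × ℝ → ℝ} (hc : ContDiff ℝ 1 h) (hs : SuppInDisc h)
    {z : ℝ × ℝ} (hz : 1 ≤ |z.2|) : fderiv ℝ h z = 0 := by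
  apply fderiv_disc hc hs
  nlinarith [sq_nonneg z.1, sq_abs z.2, abs_nonneg z.2]

lemma integrableOn_Ioi_of_vanish {E : Type*} [NormedAddCommGroup E] {φ : ℝ → E}
    (hφ : Continuous φ) {R : ℝ} (hv : ∀ t, R ≤ t → φ t = 0) :
    IntegrableOn φ (Ioi (0 : ℝ)) := by
  have h1 : IntegrableOn φ (Ioc 0 R) := hφ.integrableOn_Ioc
  have h2 : IntegrableOn φ (Ioi R) := by
    exact (integrableOn_congr_fun (g := fun _ => (0 : E))
      (fun t ht => hv t (le_of_lt ht)) measurableSet_Ioi).mpr integrableOn_zero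
  refine (h1.union h2).mono_set (fun t ht => ?_)
  rcases le_or_gt t R with h | h
  · exact Or.inl ⟨ht, h⟩
  · exact Or.inr h

lemma cont_ray {E : Type*} [NormedAddCommGroup E] {h : ℝ × ℝ → E} (hc : Continuous h)
    (w x : ℝ × ℝ) : Continuous fun t : ℝ => h (x + t • w) := by
  apply hc.comp
  exact continuous_const.add (continuous_id.smul continuous_const)

lemma ray_escape {x w : ℝ × ℝ} (hw : 0 < w.2) {t : ℝ} (ht : (1 + |x.2|) / w.2 ≤ t) :
    1 ≤ |(x + t • w).2| := by
  have h1 : 1 + |x.2| ≤ t * w.2 := (div_le_iff₀ hw).mp ht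
  have h2 : -|x.2| ≤ x.2 := neg_abs_le x.2
  have h3 : (x + t • w).2 = x.2 + t * w.2 := rfl
  rw [h3]
  have : 1 ≤ x.2 + t * w.2 := by linarith
  exact this.trans (le_abs_self _)

lemma ray_escape_ball {x y w : ℝ × ℝ} (hw : 0 < w.2) (hy : y ∈ ball x 1) {t : ℝ}
    (ht : (2 + |x.2|) / w.2 ≤ t) : 1 ≤ (y + t • w).2 := by
  have h1 : 2 + |x.2| ≤ t * w.2 := (div_le_iff₀ hw).mp ht
  have h2 : -|x.2| ≤ x.2 := neg_abs_le x.2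
  have hd : |y.2 - x.2| < 1 := by
    have := mem_ball.mp hy
    have h4 : dist y.2 x.2 ≤ dist y x := by
      rw [Prod.dist_eq]; exact le_max_right _ _
    rw [Real.dist_eq] at h4
    linarith
  have h5 : x.2 - y.2 < 1 := by
    have := abs_sub_lt_iff.mp hd
    linarith [this.2]
  show 1 ≤ y.2 + t * w.2
  linarith

lemma integrableOn_ray {E : Type*} [NormedAddCommGroup E] {h : ℝ × ℝ → E}
    (hc : Continuous h) (hs : ∀ z : ℝ × ℝ, 1 ≤ |z.2| → h z = 0)
    {w : ℝ × ℝ} (hw : 0 < w.2) (x : ℝ × ℝ) :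
    IntegrableOn (fun t => h (x + t • w)) (Ioi (0 : ℝ)) := by
  apply integrableOn_Ioi_of_vanish (cont_ray hc w x) (R := (1 + |x.2|) / w.2)
  intro t ht
  exact hs _ (ray_escape hw ht)


lemma ftc_ray {h : ℝ × ℝ → ℝ} (hc : ContDiff ℝ 1 h) (hdisc : SuppInDisc h)
    {w : ℝ × ℝ} (hw : 0 < w.2) (x : ℝ × ℝ) :
    (∫ t in Ioi (0 : ℝ), fderiv ℝ h (x + t • w) w) = - h x := by
  have hdiff : ∀ t ∈ Ici (0 : ℝ),
      HasDerivAt (fun t => h (x + t • w)) (fderiv ℝ h (x + t • w) w) t := by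
    intro t _
    have h1 : HasDerivAt (fun t : ℝ => x + t • w) w t := by
      simpa using ((hasDerivAt_id t).smul_const w).const_add x
    exact (hc.differentiable one_ne_zero (x + t • w)).hasFDerivAt.comp_hasDerivAt t h1
  have hint : IntegrableOn (fun t => fderiv ℝ h (x + t • w) w) (Ioi (0 : ℝ)) := by
    apply integrableOn_ray (h := fun z => fderiv ℝ h z w)
    · exact (hc.continuous_fderiv one_ne_zero).clm_apply continuous_const
    · intro z hz; rw [fderiv_slab hc hdisc hz]; rfl
    · exact hw
  have htend : Tendsto (fun t : ℝ => h (x + t • w)) atTop (nhds 0) := by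
    have hev : ∀ᶠ t : ℝ in atTop, h (x + t • w) = 0 := by
      filter_upwards [eventually_ge_atTop ((1 + |x.2|) / w.2)] with t ht
      exact slab_of_disc hdisc (ray_escape hw ht)
    exact Tendsto.congr' (Filter.EventuallyEq.symm hev) tendsto_const_nhds
  have := integral_Ioi_of_hasDerivAt_of_tendsto' hdiff hint htend
  simpa using this

lemma exists_fderiv_bound {p : ℝ × ℝ → ℝ} (hp : ContDiff ℝ 1 p) (hdisc : SuppInDisc p) :
    ∃ C, ∀ z, ‖fderiv ℝ p z‖ ≤ C := by
  apply HasCompactSupport.exists_bound_of_continuous _ (hp.continuous_fderiv one_ne_zero)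
  apply HasCompactSupport.intro (isCompact_closedBall (0 : ℝ × ℝ) 1)
  intro z hz
  apply fderiv_disc hp hdisc
  rw [mem_closedBall_zero_iff] at hz
  push_neg at hz
  rw [Prod.norm_def] at hz
  rcases lt_max_iff.mp hz with h1 | h2
  · rw [Real.norm_eq_abs] at h1
    nlinarith [sq_abs z.1, sq_nonneg z.2, abs_nonneg z.1]
  · rw [Real.norm_eq_abs] at h2
    nlinarith [sq_abs z.2, sq_nonneg z.1, abs_nonneg z.2]

lemma hasFDerivAt_Xbeam {h : ℝ × ℝ → ℝ} {h' : ℝ × ℝ → ((ℝ × ℝ) →L[ℝ] ℝ)}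
    (hd : ∀ y, HasFDerivAt h (h' y) y) (hcm : Continuous h')
    {w : ℝ × ℝ} (x : ℝ × ℝ) {C R : ℝ}
    (hb : ∀ z, ‖h' z‖ ≤ C)
    (hv : ∀ y ∈ ball x 1, ∀ t : ℝ, R ≤ t → h (y + t • w) = 0 ∧ h' (y + t • w) = 0) :
    HasFDerivAt (Xbeam w h) (∫ t in Ioi (0 : ℝ), h' (x + t • w)) x := by
  have hch : Continuous h := continuous_iff_continuousAt.mpr fun y => (hd y).continuousAt
  have key := hasFDerivAt_integral_of_dominated_of_fderiv_le
    (F := fun y t => h (y + t • w)) (F' := fun y t => h' (y + t • w))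
    (μ := volume.restrict (Ioi (0 : ℝ))) (x₀ := x)
    (bound := (Ioc (0 : ℝ) (max R 0)).indicator fun _ => C) (ball_mem_nhds x one_pos)
    ?_ ?_ ?_ ?_ ?_ ?_
  · exact key
  · exact Filter.Eventually.of_forall fun y => (cont_ray hch w y).aestronglyMeasurable
  · exact integrableOn_Ioi_of_vanish (cont_ray hch w x)
      (fun t ht => (hv x (mem_ball_self one_pos) t ht).1)
  · exact (cont_ray hcm w x).aestronglyMeasurable
  · refine (ae_restrict_iff' measurableSet_Ioi).mpr
      (Filter.Eventually.of_forall fun t ht => fun y hy => ?_)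
    show ‖h' (y + t • w)‖ ≤ (Ioc (0 : ℝ) (max R 0)).indicator (fun _ => C) t
    by_cases htR : t ≤ max R 0
    · rw [indicator_of_mem (show t ∈ Ioc (0 : ℝ) (max R 0) from ⟨ht, htR⟩)]
      exact hb _
    · rw [indicator_of_notMem (fun hmem => htR hmem.2),
        (hv y hy t ((le_max_left R 0).trans (le_of_not_ge htR))).2]
      simp
  · rw [integrable_indicator_iff measurableSet_Ioc]
    apply (integrableOn_const_iff (C := C)).mpr
    right
    exact lt_of_le_of_lt (Measure.restrict_apply_le _ _) measure_Ioc_lt_top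
  · refine Filter.Eventually.of_forall fun t => fun y _ => ?_
    have h1 : HasFDerivAt (fun y : ℝ × ℝ => y + t • w)
        (ContinuousLinearMap.id ℝ (ℝ × ℝ)) y := by
      simpa using (hasFDerivAt_id y).add_const (t • w)
    have := (hd (y + t • w)).comp y h1
    exact this

lemma norm_integral_window {h' : ℝ × ℝ → ((ℝ × ℝ) →L[ℝ] ℝ)} {C : ℝ}
    (hb : ∀ z, ‖h' z‖ ≤ C) (hslab : ∀ z : ℝ × ℝ, 1 ≤ |z.2| → h' z = 0)
    {w : ℝ × ℝ} (hw : 0 < w.2) (z : ℝ × ℝ) :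
    ‖∫ t in Ioi (0 : ℝ), h' (z + t • w)‖ ≤ C * (2 / w.2) := by
  have hC : 0 ≤ C := le_trans (norm_nonneg _) (hb 0)
  set a := (-1 - z.2) / w.2 with ha
  set b := (1 - z.2) / w.2 with hbdef
  have hw' : w.2 ≠ 0 := ne_of_gt hw
  have hout : ∀ t : ℝ, t ∉ Icc a b → h' (z + t • w) = 0 := by
    intro t ht
    apply hslab
    have h2 : (z + t • w).2 = z.2 + t * w.2 := rfl
    rw [h2]
    rcases not_and_or.mp (fun hm => ht (mem_Icc.mpr hm)) with h | h
    · push_neg at h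
      have : t * w.2 < a * w.2 := by exact mul_lt_mul_of_pos_right h hw
      rw [ha, div_mul_cancel₀ _ hw'] at this
      refine le_abs.mpr (Or.inr ?_)
      linarith
    · push_neg at h
      have : b * w.2 < t * w.2 := mul_lt_mul_of_pos_right h hw
      rw [hbdef, div_mul_cancel₀ _ hw'] at this
      exact le_abs.mpr (Or.inl (by linarith))
  have hbint : Integrable ((Icc a b).indicator fun _ => C)
      (volume.restrict (Ioi (0 : ℝ))) := by
    rw [integrable_indicator_iff measurableSet_Icc]
    apply (integrableOn_const_iff (C := C)).mpr
    right
    exact lt_of_le_of_lt (Measure.restrict_apply_le _ _) measure_Icc_lt_top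
  have hle : ‖∫ t in Ioi (0 : ℝ), h' (z + t • w)‖
      ≤ ∫ t in Ioi (0 : ℝ), (Icc a b).indicator (fun _ => C) t := by
    apply norm_integral_le_of_norm_le hbint
    refine Filter.Eventually.of_forall fun t => ?_
    by_cases htm : t ∈ Icc a b
    · rw [indicator_of_mem htm]
      exact hb _
    · rw [indicator_of_notMem htm, hout t htm]
      simp
  refine hle.trans ?_
  rw [integral_indicator measurableSet_Icc,
    Measure.restrict_restrict measurableSet_Icc, setIntegral_const]
  have h4 : b - a = 2 / w.2 := by
    rw [ha, hbdef, div_sub_div_same]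
    congr 1
    ring
  have hba : 0 ≤ b - a := by
    rw [h4]
    positivity
  have h3 : (volume (Icc a b ∩ Ioi 0)).toReal ≤ b - a := by
    apply ENNReal.toReal_le_of_le_ofReal hba
    calc volume (Icc a b ∩ Ioi 0) ≤ volume (Icc a b) := measure_mono inter_subset_left
      _ = ENNReal.ofReal (b - a) := Real.volume_Icc
  rw [smul_eq_mul]
  calc (volume (Icc a b ∩ Ioi 0)).toReal * C ≤ (b - a) * C := by
        exact mul_le_mul_of_nonneg_right h3 hC
    _ = C * (2 / w.2) := by rw [h4]; ring


def XD (w : ℝ × ℝ) (p : ℝ × ℝ → ℝ) (z : ℝ × ℝ) : (ℝ × ℝ) →L[ℝ] ℝ :=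
  ∫ t in Ioi (0 : ℝ), fderiv ℝ p (z + t • w)

lemma level1 {p : ℝ × ℝ → ℝ} (hp : ContDiff ℝ 1 p) (hdisc : SuppInDisc p)
    {w : ℝ × ℝ} (hw : 0 < w.2) :
    (∀ z, HasFDerivAt (Xbeam w p) (XD w p z) z) ∧
    Continuous (XD w p) ∧
    (∃ K, ∀ z, ‖XD w p z‖ ≤ K) ∧
    (∀ z : ℝ × ℝ, 1 ≤ z.2 → Xbeam w p z = 0 ∧ XD w p z = 0) ∧
    (∀ z m, XD w p z m = Xbeam w (fun y => fderiv ℝ p y m) z) := by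
  obtain ⟨C, hC⟩ := exists_fderiv_bound hp hdisc
  have hcp' : Continuous (fderiv ℝ p) := hp.continuous_fderiv one_ne_zero
  have hslab' : ∀ z : ℝ × ℝ, 1 ≤ |z.2| → fderiv ℝ p z = 0 :=
    fun z hz => fderiv_slab hp hdisc hz
  have hslabp : ∀ z : ℝ × ℝ, 1 ≤ |z.2| → p z = 0 := fun z hz => slab_of_disc hdisc hz
  refine ⟨?_, ?_, ⟨C * (2 / w.2), fun z => norm_integral_window hC hslab' hw z⟩, ?_, ?_⟩
  · intro z
    apply hasFDerivAt_Xbeam (fun y => (hp.differentiable one_ne_zero y).hasFDerivAt) hcp' z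
      (C := C) (R := (2 + |z.2|) / w.2) hC
    intro y hy t ht
    have habs : 1 ≤ |(y + t • w).2| := (ray_escape_ball hw hy ht).trans (le_abs_self _)
    exact ⟨hslabp _ habs, hslab' _ habs⟩
  · rw [continuous_iff_continuousAt]
    intro z₀
    set R := (2 + |z₀.2|) / w.2 with hR
    have key := continuousAt_of_dominated (F := fun z t => fderiv ℝ p (z + t • w))
      (μ := volume.restrict (Ioi (0 : ℝ))) (x₀ := z₀)
      (bound := (Ioc (0 : ℝ) (max R 0)).indicator fun _ => C)
      (Filter.Eventually.of_forall fun z => (cont_ray hcp' w z).aestronglyMeasurable)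
      ?_ ?_ ?_
    · exact key
    · filter_upwards [ball_mem_nhds z₀ one_pos] with z hz
      refine (ae_restrict_iff' measurableSet_Ioi).mpr
        (Filter.Eventually.of_forall fun t ht => ?_)
      by_cases htR : t ≤ max R 0
      · rw [indicator_of_mem (show t ∈ Ioc (0 : ℝ) (max R 0) from ⟨ht, htR⟩)]
        exact hC _
      · have htR' : R ≤ t := (le_max_left R 0).trans (le_of_not_ge htR)
        rw [indicator_of_notMem (fun hmem => htR hmem.2),
          hslab' _ ((ray_escape_ball hw hz htR').trans (le_abs_self _))]
        simp
    · rw [integrable_indicator_iff measurableSet_Ioc]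
      apply (integrableOn_const_iff (C := C)).mpr
      right
      exact lt_of_le_of_lt (Measure.restrict_apply_le _ _) measure_Ioc_lt_top
    · refine Filter.Eventually.of_forall fun t => ?_
      have : Continuous fun z : ℝ × ℝ => fderiv ℝ p (z + t • w) :=
        hcp'.comp (continuous_id.add continuous_const)
      exact this.continuousAt
  · intro z hz
    have hray : ∀ t ∈ Ioi (0 : ℝ), 1 ≤ |(z + t • w).2| := by
      intro t ht
      have h2 : (z + t • w).2 = z.2 + t * w.2 := rfl
      refine le_trans ?_ (le_abs_self _)
      rw [h2]
      nlinarith [mem_Ioi.mp ht]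
    constructor
    · show (∫ t in Ioi (0 : ℝ), p (z + t • w)) = 0
      rw [setIntegral_congr_fun (g := fun _ => (0 : ℝ)) measurableSet_Ioi
        (fun t ht => hslabp _ (hray t ht))]
      simp
    · show (∫ t in Ioi (0 : ℝ), fderiv ℝ p (z + t • w)) = 0
      rw [setIntegral_congr_fun (g := fun _ => (0 : (ℝ × ℝ) →L[ℝ] ℝ)) measurableSet_Ioi
        (fun t ht => hslab' _ (hray t ht))]
      simp
  · intro z m
    show (∫ t in Ioi (0 : ℝ), fderiv ℝ p (z + t • w)) m = _
    rw [ContinuousLinearMap.integral_apply (integrableOn_ray hcp' hslab' hw z)]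
    rfl


lemma master {p : ℝ × ℝ → ℝ} (hp : ContDiff ℝ 1 p) (hdisc : SuppInDisc p)
    {u v : ℝ × ℝ} (hu : 0 < u.2) (hv : 0 < v.2) (x : ℝ × ℝ) :
    ∃ D : (ℝ × ℝ) →L[ℝ] ℝ,
      HasFDerivAt (Xbeam ((0 : ℝ), (1 : ℝ)) (fun y => Xbeam u p y + Xbeam v p y)) D x ∧
      ∀ m, D m = Xbeam ((0 : ℝ), (1 : ℝ))
        (fun y => Xbeam u (fun z => fderiv ℝ p z m) y
          + Xbeam v (fun z => fderiv ℝ p z m) y) x := by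
  obtain ⟨hdu, hcu, ⟨Ku, hKu⟩, hvu, hau⟩ := level1 hp hdisc hu
  obtain ⟨hdv, hcv, ⟨Kv, hKv⟩, hvv, hav⟩ := level1 hp hdisc hv
  set w : ℝ × ℝ := ((0 : ℝ), (1 : ℝ)) with hwdef
  have hw : (0 : ℝ) < w.2 := one_pos
  set H : ℝ × ℝ → ℝ := fun y => Xbeam u p y + Xbeam v p y with hH
  set DH : ℝ × ℝ → (ℝ × ℝ) →L[ℝ] ℝ := fun z => XD u p z + XD v p z with hDH
  have hdH : ∀ z, HasFDerivAt H (DH z) z := fun z => (hdu z).add (hdv z)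
  have hcH : Continuous DH := hcu.add hcv
  have hbH : ∀ z, ‖DH z‖ ≤ Ku + Kv :=
    fun z => (norm_add_le _ _).trans (add_le_add (hKu z) (hKv z))
  have hvH : ∀ z : ℝ × ℝ, 1 ≤ z.2 → H z = 0 ∧ DH z = 0 := by
    intro z hz
    constructor
    · show Xbeam u p z + Xbeam v p z = 0
      rw [(hvu z hz).1, (hvv z hz).1, add_zero]
    · show XD u p z + XD v p z = 0
      rw [(hvu z hz).2, (hvv z hz).2, add_zero]
  have hvball : ∀ y ∈ ball x 1, ∀ t : ℝ, (2 + |x.2|) / w.2 ≤ t →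
      H (y + t • w) = 0 ∧ DH (y + t • w) = 0 := by
    intro y hy t ht
    exact hvH _ (ray_escape_ball hw hy ht)
  have hDint : IntegrableOn (fun t => DH (x + t • w)) (Ioi (0 : ℝ)) := by
    apply integrableOn_Ioi_of_vanish (cont_ray hcH w x) (R := (2 + |x.2|) / w.2)
    intro t ht
    exact (hvball x (mem_ball_self one_pos) t ht).2
  refine ⟨∫ t in Ioi (0 : ℝ), DH (x + t • w), hasFDerivAt_Xbeam hdH hcH x hbH hvball, ?_⟩
  intro m
  rw [ContinuousLinearMap.integral_apply hDint]
  show (∫ t in Ioi (0 : ℝ), DH (x + t • w) m) = ∫ t in Ioi (0 : ℝ), _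
  refine setIntegral_congr_fun measurableSet_Ioi (fun t _ => ?_)
  show XD u p (x + t • w) m + XD v p (x + t • w) m = _
  rw [hau, hav]


lemma symm_mixed {g : ℝ × ℝ → ℝ} (hg : ContDiff ℝ 2 g) (a b z : ℝ × ℝ) :
    fderiv ℝ (fun y => fderiv ℝ g y a) z b = fderiv ℝ (fun y => fderiv ℝ g y b) z a := by
  have hfd : ContDiff ℝ 1 (fderiv ℝ g) := hg.fderiv_right (m := 1) (by norm_num)
  have hder : ∀ y, HasFDerivAt g (fderiv ℝ g y) y :=
    fun y => (hg.differentiable two_ne_zero y).hasFDerivAt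
  have h2 : HasFDerivAt (fderiv ℝ g) (fderiv ℝ (fderiv ℝ g) z) z :=
    (hfd.differentiable one_ne_zero z).hasFDerivAt
  have key : ∀ c : ℝ × ℝ, HasFDerivAt (fun y => fderiv ℝ g y c)
      ((ContinuousLinearMap.apply ℝ ℝ c).comp (fderiv ℝ (fderiv ℝ g) z)) z :=
    fun c => ((ContinuousLinearMap.apply ℝ ℝ c).hasFDerivAt).comp z h2
  rw [(key a).fderiv, (key b).fderiv]
  simp only [ContinuousLinearMap.coe_comp', Function.comp_apply,
    ContinuousLinearMap.apply_apply]
  exact second_derivative_symmetric hder h2 b a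

lemma xbeam_add_eq {a b c : ℝ × ℝ → ℝ} (ha : Continuous a) (hb : Continuous b)
    (sa : ∀ z : ℝ × ℝ, 1 ≤ |z.2| → a z = 0) (sb : ∀ z : ℝ × ℝ, 1 ≤ |z.2| → b z = 0)
    (hab : ∀ z, a z + b z = c z) {w : ℝ × ℝ} (hw : 0 < w.2) (y : ℝ × ℝ) :
    Xbeam w a y + Xbeam w b y = Xbeam w c y := by
  show (∫ t in Ioi (0 : ℝ), a (y + t • w)) + (∫ t in Ioi (0 : ℝ), b (y + t • w))
      = ∫ t in Ioi (0 : ℝ), c (y + t • w)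
  rw [← integral_add (integrableOn_ray ha sa hw y) (integrableOn_ray hb sb hw y)]
  exact integral_congr_ae (Filter.Eventually.of_forall fun t => hab _)

end TraceAux

open TraceAux

/-- recovery of the trace of a symmetric 2-tensor field from its
longitudinal and transverse V-line transforms. -/
theorem trace_recovery
    (u1 u2 : ℝ) (hu : u1 ^ 2 + u2 ^ 2 = 1) (hu1 : 0 < u1) (hu2 : 0 < u2)
    (f11 f12 f22 : ℝ × ℝ → ℝ)
    (h11 : ContDiff ℝ 2 f11) (h12 : ContDiff ℝ 2 f12) (h22 : ContDiff ℝ 2 f22)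
    (s11 : SuppInDisc f11) (s12 : SuppInDisc f12) (s22 : SuppInDisc f22)
    (x : ℝ × ℝ) :
    f11 x + f22 x =
      (1 / (2 * u2)) *
        Dir (u1, u2) (Dir (-u1, u2)
          (Xbeam ((0 : ℝ), (1 : ℝ))
            (VlineL u1 u2 f11 f12 f22 + VlineT u1 u2 f11 f12 f22))) x := by
  have hu2u : (0 : ℝ) < ((u1, u2) : ℝ × ℝ).2 := hu2
  have hu2v : (0 : ℝ) < ((-u1, u2) : ℝ × ℝ).2 := hu2
  have hw2 : (0 : ℝ) < (((0 : ℝ), (1 : ℝ)) : ℝ × ℝ).2 := one_pos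
  set g : ℝ × ℝ → ℝ := fun y => f11 y + f22 y with hgdef
  have hg2 : ContDiff ℝ 2 g := h11.add h22
  have hg1 : ContDiff ℝ 1 g := hg2.of_le one_le_two
  have hgdisc : SuppInDisc g := by
    intro z hz
    show f11 z + f22 z = 0
    rw [s11 z hz, s22 z hz, add_zero]
  have k11 := h11.continuous
  have k12 := h12.continuous
  have k22 := h22.continuous
  -- Step A : (L + T) f = X_u g + X_v g
  have hVLT : VlineL u1 u2 f11 f12 f22 + VlineT u1 u2 f11 f12 f22
      = fun y => Xbeam (u1, u2) g y + Xbeam (-u1, u2) g y := by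
    funext y
    have c1 : Continuous fun z : ℝ × ℝ =>
        u1 ^ 2 * f11 z + 2 * u1 * u2 * f12 z + u2 ^ 2 * f22 z :=
      ((continuous_const.mul k11).add (continuous_const.mul k12)).add (continuous_const.mul k22)
    have c2 : Continuous fun z : ℝ × ℝ =>
        u1 ^ 2 * f11 z - 2 * u1 * u2 * f12 z + u2 ^ 2 * f22 z :=
      (((continuous_const.mul k11).sub (continuous_const.mul k12))).add (continuous_const.mul k22)
    have c3 : Continuous fun z : ℝ × ℝ =>
        u2 ^ 2 * f11 z - 2 * u1 * u2 * f12 z + u1 ^ 2 * f22 z :=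
      (((continuous_const.mul k11).sub (continuous_const.mul k12))).add (continuous_const.mul k22)
    have c4 : Continuous fun z : ℝ × ℝ =>
        u2 ^ 2 * f11 z + 2 * u1 * u2 * f12 z + u1 ^ 2 * f22 z :=
      ((continuous_const.mul k11).add (continuous_const.mul k12)).add (continuous_const.mul k22)
    have s1 : ∀ z : ℝ × ℝ, 1 ≤ |z.2| →
        u1 ^ 2 * f11 z + 2 * u1 * u2 * f12 z + u2 ^ 2 * f22 z = 0 := by
      intro z hz
      rw [slab_of_disc s11 hz, slab_of_disc s12 hz, slab_of_disc s22 hz]; ring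
    have s2 : ∀ z : ℝ × ℝ, 1 ≤ |z.2| →
        u1 ^ 2 * f11 z - 2 * u1 * u2 * f12 z + u2 ^ 2 * f22 z = 0 := by
      intro z hz
      rw [slab_of_disc s11 hz, slab_of_disc s12 hz, slab_of_disc s22 hz]; ring
    have s3 : ∀ z : ℝ × ℝ, 1 ≤ |z.2| →
        u2 ^ 2 * f11 z - 2 * u1 * u2 * f12 z + u1 ^ 2 * f22 z = 0 := by
      intro z hz
      rw [slab_of_disc s11 hz, slab_of_disc s12 hz, slab_of_disc s22 hz]; ring
    have s4 : ∀ z : ℝ × ℝ, 1 ≤ |z.2| →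
        u2 ^ 2 * f11 z + 2 * u1 * u2 * f12 z + u1 ^ 2 * f22 z = 0 := by
      intro z hz
      rw [slab_of_disc s11 hz, slab_of_disc s12 hz, slab_of_disc s22 hz]; ring
    have e1 := xbeam_add_eq (c := g) c1 c3 s1 s3
      (fun z => by show _ = f11 z + f22 z; linear_combination (f11 z + f22 z) * hu) hu2u y
    have e2 := xbeam_add_eq (c := g) c2 c4 s2 s4
      (fun z => by show _ = f11 z + f22 z; linear_combination (f11 z + f22 z) * hu) hu2v y
    simp only [VlineL, VlineT, Pi.add_apply]
    linarith [e1, e2]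
  -- derivative data for g
  have hfdr : ContDiff ℝ 1 (fderiv ℝ g) := hg2.fderiv_right (m := 1) (by norm_num)
  have hDvg1 : ContDiff ℝ 1 (fun z => fderiv ℝ g z ((-u1, u2) : ℝ × ℝ)) :=
    hfdr.clm_apply contDiff_const
  have hDug1 : ContDiff ℝ 1 (fun z => fderiv ℝ g z ((u1, u2) : ℝ × ℝ)) :=
    hfdr.clm_apply contDiff_const
  have hDvgdisc : SuppInDisc (fun z => fderiv ℝ g z ((-u1, u2) : ℝ × ℝ)) := by
    intro z hz
    show fderiv ℝ g z (-u1, u2) = 0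
    rw [fderiv_disc hg1 hgdisc hz]; rfl
  have hDugdisc : SuppInDisc (fun z => fderiv ℝ g z ((u1, u2) : ℝ × ℝ)) := by
    intro z hz
    show fderiv ℝ g z (u1, u2) = 0
    rw [fderiv_disc hg1 hgdisc hz]; rfl
  -- Step C : first directional derivative
  have hC : Dir (-u1, u2) (Xbeam ((0 : ℝ), (1 : ℝ))
        (VlineL u1 u2 f11 f12 f22 + VlineT u1 u2 f11 f12 f22))
      = Xbeam ((0 : ℝ), (1 : ℝ))
          (fun y => Xbeam (u1, u2) (fun z => fderiv ℝ g z ((-u1, u2) : ℝ × ℝ)) y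
            + Xbeam (-u1, u2) (fun z => fderiv ℝ g z ((-u1, u2) : ℝ × ℝ)) y) := by
    funext x'
    simp only [Dir]
    rw [hVLT]
    obtain ⟨D, hD, hDm⟩ := master hg1 hgdisc hu2u hu2v x'
    rw [hD.fderiv]
    exact hDm (-u1, u2)
  -- Step D : second directional derivative
  have hD2 : Dir (u1, u2) (Xbeam ((0 : ℝ), (1 : ℝ))
        (fun y => Xbeam (u1, u2) (fun z => fderiv ℝ g z ((-u1, u2) : ℝ × ℝ)) y
          + Xbeam (-u1, u2) (fun z => fderiv ℝ g z ((-u1, u2) : ℝ × ℝ)) y)) x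
      = Xbeam ((0 : ℝ), (1 : ℝ))
          (fun y => Xbeam (u1, u2)
              (fun z => fderiv ℝ (fun z' => fderiv ℝ g z' ((-u1, u2) : ℝ × ℝ)) z
                ((u1, u2) : ℝ × ℝ)) y
            + Xbeam (-u1, u2)
              (fun z => fderiv ℝ (fun z' => fderiv ℝ g z' ((-u1, u2) : ℝ × ℝ)) z
                ((u1, u2) : ℝ × ℝ)) y) x := by
    simp only [Dir]
    obtain ⟨D, hD, hDm⟩ := master hDvg1 hDvgdisc hu2u hu2v x
    rw [hD.fderiv]
    exact hDm (u1, u2)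
  -- Step E : FTC evaluation
  have hE : (fun y => Xbeam (u1, u2)
        (fun z => fderiv ℝ (fun z' => fderiv ℝ g z' ((-u1, u2) : ℝ × ℝ)) z
          ((u1, u2) : ℝ × ℝ)) y
      + Xbeam (-u1, u2)
        (fun z => fderiv ℝ (fun z' => fderiv ℝ g z' ((-u1, u2) : ℝ × ℝ)) z
          ((u1, u2) : ℝ × ℝ)) y)
      = fun y => (-(2 * u2)) * fderiv ℝ g y (((0 : ℝ), (1 : ℝ)) : ℝ × ℝ) := by
    funext y
    have t1 : Xbeam (u1, u2)
        (fun z => fderiv ℝ (fun z' => fderiv ℝ g z' ((-u1, u2) : ℝ × ℝ)) z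
          ((u1, u2) : ℝ × ℝ)) y = - fderiv ℝ g y ((-u1, u2) : ℝ × ℝ) :=
      ftc_ray hDvg1 hDvgdisc hu2u y
    have hQ : (fun z => fderiv ℝ (fun z' => fderiv ℝ g z' ((-u1, u2) : ℝ × ℝ)) z
          ((u1, u2) : ℝ × ℝ))
        = fun z => fderiv ℝ (fun z' => fderiv ℝ g z' ((u1, u2) : ℝ × ℝ)) z
          ((-u1, u2) : ℝ × ℝ) := by
      funext z
      exact symm_mixed hg2 (-u1, u2) (u1, u2) z
    have t2 : Xbeam (-u1, u2)
        (fun z => fderiv ℝ (fun z' => fderiv ℝ g z' ((-u1, u2) : ℝ × ℝ)) z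
          ((u1, u2) : ℝ × ℝ)) y = - fderiv ℝ g y ((u1, u2) : ℝ × ℝ) := by
      rw [hQ]
      exact ftc_ray hDug1 hDugdisc hu2v y
    rw [t1, t2]
    have hsum : ((-u1, u2) : ℝ × ℝ) + ((u1, u2) : ℝ × ℝ)
        = (2 * u2) • (((0 : ℝ), (1 : ℝ)) : ℝ × ℝ) := by
      refine Prod.ext ?_ ?_ <;> simp <;> ring
    have hlin : fderiv ℝ g y ((-u1, u2) : ℝ × ℝ) + fderiv ℝ g y ((u1, u2) : ℝ × ℝ)
        = 2 * u2 * fderiv ℝ g y (((0 : ℝ), (1 : ℝ)) : ℝ × ℝ) := by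
      rw [← (fderiv ℝ g y).map_add, hsum, (fderiv ℝ g y).map_smul, smul_eq_mul]
    linarith [hlin]
  have hE2 : Xbeam ((0 : ℝ), (1 : ℝ))
      (fun y => (-(2 * u2)) * fderiv ℝ g y (((0 : ℝ), (1 : ℝ)) : ℝ × ℝ)) x
      = (-(2 * u2)) * Xbeam ((0 : ℝ), (1 : ℝ))
          (fun y => fderiv ℝ g y (((0 : ℝ), (1 : ℝ)) : ℝ × ℝ)) x := by
    show (∫ t in Set.Ioi (0 : ℝ),
        (-(2 * u2)) * fderiv ℝ g (x + t • (((0 : ℝ), (1 : ℝ)) : ℝ × ℝ))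
          (((0 : ℝ), (1 : ℝ)) : ℝ × ℝ)) = _
    rw [MeasureTheory.integral_const_mul]
    rfl
  have hE3 : Xbeam ((0 : ℝ), (1 : ℝ))
      (fun y => fderiv ℝ g y (((0 : ℝ), (1 : ℝ)) : ℝ × ℝ)) x = - g x :=
    ftc_ray hg1 hgdisc hw2 x
  rw [hC, hD2, hE, hE2, hE3]
  have hgx : g x = f11 x + f22 x := rfl
  rw [hgx]
  have hne : u2 ≠ 0 := ne_of_gt hu2
  field_simp
end
end

section
/- Assume u1 = u2 = 1/√2. Let f = (f11, f12, f22) ∈ C²_c(S²; D1). Then for every x ∈ ℝ²: f12(x) = (1/(4 u1)) · D_u D_v G (x), where G(y) = ∫₀^∞ (Lf − Tf)(y − t e1) dt; and (f22 − f11)(x) = (1/u1) · D_u D_v H (x), where H(y) = ∫₀^∞ Mf(y − t e1) dt. -/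
noncomputable section

open MeasureTheory

namespace VTAux

open Set Filter

abbrev Pt := ℝ × ℝ

structure Nice (w : Pt) (h : Pt → ℝ) : Prop where
  diff : Differentiable ℝ h
  bound : ∃ C, ∀ y, ‖fderiv ℝ h y‖ ≤ C
  escape : ∀ x : Pt, ∃ T : ℝ, ∀ y ∈ Metric.ball x 1, ∀ t : ℝ, T ≤ t →
    h (y + t • w) = 0 ∧ fderiv ℝ h (y + t • w) = 0

lemma ball_coord {x y : Pt} (h : y ∈ Metric.ball x 1) : |y.1 - x.1| < 1 ∧ |y.2 - x.2| < 1 := by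
  rw [Metric.mem_ball, Prod.dist_eq, Real.dist_eq, Real.dist_eq] at h
  exact ⟨lt_of_le_of_lt (le_max_left _ _) h, lt_of_le_of_lt (le_max_right _ _) h⟩

lemma hcs {p : Pt → ℝ} (hc : Continuous p) (hs : SuppInDisc p) : HasCompactSupport p := by
  apply HasCompactSupport.intro (isCompact_closedBall (0 : Pt) 1)
  intro q hq
  apply hs
  simp only [Metric.mem_closedBall, not_le, Prod.dist_eq, Real.dist_eq, Prod.fst_zero,
    Prod.snd_zero, sub_zero] at hq
  rcases lt_max_iff.1 hq with h | h
  · nlinarith [sq_nonneg q.2, sq_abs q.1]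
  · nlinarith [sq_nonneg q.1, sq_abs q.2]

lemma exists_bound {p : Pt → ℝ} (hp : ContDiff ℝ 1 p) (hs : SuppInDisc p) :
    ∃ C, ∀ y, ‖fderiv ℝ p y‖ ≤ C := by
  have h1 : HasCompactSupport (fderiv ℝ p) := HasCompactSupport.fderiv (𝕜 := ℝ) (hcs hp.continuous hs)
  exact h1.exists_bound_of_continuous (hp.continuous_fderiv one_ne_zero)

lemma suppInDisc_fderiv {g : Pt → ℝ} (hg : ContDiff ℝ 1 g) (hs : SuppInDisc g) :
    ∀ z : Pt, 1 ≤ z.1 ^ 2 + z.2 ^ 2 → fderiv ℝ g z = 0 := by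
  intro z hz
  have hcont : Continuous (fderiv ℝ g) := hg.continuous_fderiv one_ne_zero
  have key : ∀ w : Pt, 1 < w.1 ^ 2 + w.2 ^ 2 → fderiv ℝ g w = 0 := by
    intro w hw
    have hopen : IsOpen {p : Pt | 1 < p.1 ^ 2 + p.2 ^ 2} :=
      isOpen_lt continuous_const (by fun_prop)
    have hev : g =ᶠ[nhds w] 0 := by
      filter_upwards [hopen.mem_nhds hw] with p hp
      exact hs p (le_of_lt hp)
    rw [hev.fderiv_eq]
    exact fderiv_const_apply 0
  have htend : Tendsto (fun ε : ℝ => fderiv ℝ g ((1 + ε) • z)) (nhdsWithin 0 (Ioi 0))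
      (nhds (fderiv ℝ g z)) := by
    have hc : Continuous fun ε : ℝ => fderiv ℝ g ((1 + ε) • z) := by
      apply hcont.comp; fun_prop
    have := hc.tendsto 0
    simp only [add_zero, one_smul] at this
    exact this.mono_left nhdsWithin_le_nhds
  have heq : ∀ ε ∈ Ioi (0 : ℝ), fderiv ℝ g ((1 + ε) • z) = 0 := by
    intro ε hε
    apply key
    have h1 : ((1 + ε) • z).1 = (1 + ε) * z.1 := rfl
    have h2 : ((1 + ε) • z).2 = (1 + ε) * z.2 := rfl
    rw [h1, h2]
    have hε' : (0:ℝ) < ε := hε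
    nlinarith [sq_nonneg z.1, sq_nonneg z.2, sq_nonneg ε]
  have h0 : Tendsto (fun ε : ℝ => fderiv ℝ g ((1 + ε) • z)) (nhdsWithin 0 (Ioi 0))
      (nhds 0) := by
    apply Tendsto.congr' _ tendsto_const_nhds
    filter_upwards [self_mem_nhdsWithin] with ε hε
    exact (heq ε hε).symm
  exact tendsto_nhds_unique htend h0

lemma integrableOn_tail {E : Type*} [NormedAddCommGroup E] {f : ℝ → E} (hc : Continuous f)
    (T : ℝ) (h0 : ∀ t, T ≤ t → f t = 0) : IntegrableOn f (Set.Ioi (0 : ℝ)) := by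
  have h1 : IntegrableOn f (Set.Ioc 0 T) :=
    (hc.integrableOn_Icc).mono_set Set.Ioc_subset_Icc_self
  have h2 : IntegrableOn f (Set.Ioi T) :=
    (integrableOn_zero (ε' := E)).congr_fun (fun t ht => (h0 t (le_of_lt ht)).symm)
      measurableSet_Ioi
  exact (h1.union h2).mono_set (by
    intro t ht
    rcases le_or_gt t T with h | h
    · exact Or.inl ⟨ht, h⟩
    · exact Or.inr h)

lemma beam_deriv {h : Pt → ℝ} {w : Pt} (hn : Nice w h) (x : Pt) :
    Integrable (fun t => fderiv ℝ h (x + t • w)) (volume.restrict (Set.Ioi (0:ℝ))) ∧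
      HasFDerivAt (Xbeam w h) (∫ t in Set.Ioi (0 : ℝ), fderiv ℝ h (x + t • w)) x := by
  obtain ⟨C, hC⟩ := hn.bound
  obtain ⟨T, hT⟩ := hn.escape x
  set T' := max T 0 with hT'def
  set bound : ℝ → ℝ := (Set.Ioc (0 : ℝ) T').indicator (fun _ => C) with hbdef
  have hcont : Continuous h := hn.diff.continuous
  have hray : ∀ x' : Pt, Continuous fun t : ℝ => x' + t • w := by intro x'; fun_prop
  have hF'meas : AEStronglyMeasurable (fun t => fderiv ℝ h (x + t • w))
      (volume.restrict (Set.Ioi (0:ℝ))) := by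
    have hm : Measurable (fun t : ℝ => fderiv ℝ h (x + t • w)) :=
      (measurable_fderiv ℝ h).comp (hray x).measurable
    exact hm.aestronglyMeasurable
  have hbound_int : Integrable bound (volume.restrict (Set.Ioi (0:ℝ))) := by
    apply Integrable.integrableOn
    rw [hbdef, integrable_indicator_iff measurableSet_Ioc]
    exact integrableOn_const measure_Ioc_lt_top.ne
  have h_bound : ∀ᵐ t ∂(volume.restrict (Set.Ioi (0 : ℝ))),
      ∀ y ∈ Metric.ball x 1, ‖fderiv ℝ h (y + t • w)‖ ≤ bound t := by
    rw [ae_restrict_iff' measurableSet_Ioi]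
    apply ae_of_all
    intro t ht y hy
    rcases le_or_gt t T' with h1 | h1
    · rw [hbdef, Set.indicator_of_mem (Set.mem_Ioc.mpr ⟨ht, h1⟩)]
      exact hC _
    · rw [(hT y hy t (le_trans (le_max_left _ _) h1.le)).2, hbdef,
        Set.indicator_of_notMem (fun hmem => absurd hmem.2 (not_le.2 h1))]
      simp
  have hfam : Integrable (fun t => fderiv ℝ h (x + t • w)) (volume.restrict (Set.Ioi (0:ℝ))) := by
    apply Integrable.mono' hbound_int hF'meas
    filter_upwards [h_bound] with t ht
    exact ht x (Metric.mem_ball_self one_pos)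
  refine ⟨hfam, ?_⟩
  have hFint : Integrable (fun t => h (x + t • w)) (volume.restrict (Set.Ioi (0:ℝ))) :=
    integrableOn_tail (hcont.comp (hray x)) T
      (fun t ht => (hT x (Metric.mem_ball_self one_pos) t ht).1)
  exact hasFDerivAt_integral_of_dominated_of_fderiv_le
    (F' := fun y t => fderiv ℝ h (y + t • w)) (bound := bound) (Metric.ball_mem_nhds x one_pos)
    (Filter.Eventually.of_forall fun y => (hcont.comp (hray y)).aestronglyMeasurable)
    hFint hF'meas h_bound hbound_int
    (by
      apply ae_of_all
      intro t y hy
      have h1 : HasFDerivAt (fun z : Pt => z + t • w) (ContinuousLinearMap.id ℝ Pt) y :=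
        (hasFDerivAt_id y).add_const _
      have h2 := (hn.diff (y + t • w)).hasFDerivAt.comp y h1
      rwa [ContinuousLinearMap.comp_id] at h2)

lemma beam_fderiv {h : Pt → ℝ} {w : Pt} (hn : Nice w h) (x : Pt) :
    fderiv ℝ (Xbeam w h) x = ∫ t in Set.Ioi (0 : ℝ), fderiv ℝ h (x + t • w) :=
  (beam_deriv hn x).2.fderiv

lemma beam_dir {h : Pt → ℝ} {w : Pt} (hn : Nice w h) (z x : Pt) :
    Dir z (Xbeam w h) x = ∫ t in Set.Ioi (0 : ℝ), fderiv ℝ h (x + t • w) z := by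
  show fderiv ℝ (Xbeam w h) x z = _
  rw [beam_fderiv hn x]
  exact ContinuousLinearMap.integral_apply (beam_deriv hn x).1 z

lemma beam_ftc {h : Pt → ℝ} {w : Pt} (hn : Nice w h) (x : Pt) :
    ∫ t in Set.Ioi (0 : ℝ), fderiv ℝ h (x + t • w) w = - h x := by
  obtain ⟨T, hT⟩ := hn.escape x
  have hray : Continuous fun t : ℝ => x + t • w := by fun_prop
  have hder : ∀ t ∈ Set.Ioi (0:ℝ), HasDerivAt (fun s : ℝ => h (x + s • w))
      (fderiv ℝ h (x + t • w) w) t := by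
    intro t _
    have h1 : HasDerivAt (fun s : ℝ => x + s • w) w t := by
      simpa using ((hasDerivAt_id t).smul_const w).const_add x
    exact (hn.diff (x + t • w)).hasFDerivAt.comp_hasDerivAt t h1
  have hint : IntegrableOn (fun t => fderiv ℝ h (x + t • w) w) (Set.Ioi (0:ℝ)) :=
    (beam_deriv hn x).1.apply_continuousLinearMap w
  have htend : Tendsto (fun s : ℝ => h (x + s • w)) atTop (nhds 0) := by
    apply Tendsto.congr' _ tendsto_const_nhds
    filter_upwards [Filter.eventually_ge_atTop T] with s hs
    exact ((hT x (Metric.mem_ball_self one_pos) s hs).1).symm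
  have := integral_Ioi_of_hasDerivAt_of_tendsto
    ((hn.diff.continuous.comp hray).continuousWithinAt) hder hint htend
  simpa using this

lemma beam_dir_self {h : Pt → ℝ} {w : Pt} (hn : Nice w h) (x : Pt) :
    Dir w (Xbeam w h) x = - h x := by
  rw [beam_dir hn w x, beam_ftc hn x]

lemma nice_of_snd {p : Pt → ℝ} (hp : ContDiff ℝ 1 p) (hs : SuppInDisc p)
    (w : Pt) (hw : 0 < w.2) : Nice w p where
  diff := hp.differentiable one_ne_zero
  bound := exists_bound hp hs
  escape := by
    intro x
    refine ⟨(2 + |x.2|) / w.2, ?_⟩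
    intro y hy t ht
    have hy2 : |y.2 - x.2| < 1 := (ball_coord hy).2
    have hc2 : (y + t • w).2 = y.2 + t * w.2 := rfl
    have ht' : 2 + |x.2| ≤ t * w.2 := (div_le_iff₀ hw).1 ht
    have hq : 1 ≤ (y + t • w).1 ^ 2 + (y + t • w).2 ^ 2 := by
      rw [hc2]
      nlinarith [sq_nonneg ((y + t • w).1), neg_abs_le x.2, abs_lt.1 hy2,
        sq_nonneg (y.2 + t * w.2 - 1)]
    exact ⟨hs _ hq, suppInDisc_fderiv hp hs _ hq⟩

lemma nice_m_of_supp {p : Pt → ℝ} (hp : ContDiff ℝ 1 p) (hs : SuppInDisc p) :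
    Nice ((-1 : ℝ), (0 : ℝ)) p where
  diff := hp.differentiable one_ne_zero
  bound := exists_bound hp hs
  escape := by
    intro x
    refine ⟨|x.1| + 2, ?_⟩
    intro y hy t ht
    have hy1 : |y.1 - x.1| < 1 := (ball_coord hy).1
    have hc1 : (y + t • ((-1 : ℝ), (0 : ℝ))).1 = y.1 - t := by
      show y.1 + t * (-1) = y.1 - t; ring
    have hq : 1 ≤ (y + t • ((-1 : ℝ), (0 : ℝ))).1 ^ 2
        + (y + t • ((-1 : ℝ), (0 : ℝ))).2 ^ 2 := by
      rw [hc1]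
      nlinarith [sq_nonneg ((y + t • ((-1 : ℝ), (0 : ℝ))).2), le_abs_self x.1,
        abs_lt.1 hy1, sq_nonneg (y.1 - t + 1)]
    exact ⟨hs _ hq, suppInDisc_fderiv hp hs _ hq⟩

lemma nice_add {w : Pt} {h1 h2 : Pt → ℝ} (n1 : Nice w h1) (n2 : Nice w h2) :
    Nice w (fun y => h1 y + h2 y) where
  diff := n1.diff.add n2.diff
  bound := by
    obtain ⟨C1, hC1⟩ := n1.bound
    obtain ⟨C2, hC2⟩ := n2.bound
    refine ⟨C1 + C2, fun y => ?_⟩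
    rw [fderiv_fun_add (n1.diff y) (n2.diff y)]
    exact le_trans (norm_add_le _ _) (add_le_add (hC1 y) (hC2 y))
  escape := by
    intro x
    obtain ⟨T1, hT1⟩ := n1.escape x
    obtain ⟨T2, hT2⟩ := n2.escape x
    refine ⟨max T1 T2, fun y hy t ht => ?_⟩
    obtain ⟨e1, e1'⟩ := hT1 y hy t (le_trans (le_max_left _ _) ht)
    obtain ⟨e2, e2'⟩ := hT2 y hy t (le_trans (le_max_right _ _) ht)
    constructor
    · rw [e1, e2, add_zero]
    · rw [fderiv_fun_add (n1.diff _) (n2.diff _), e1', e2',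
        add_zero]

lemma nice_sub {w : Pt} {h1 h2 : Pt → ℝ} (n1 : Nice w h1) (n2 : Nice w h2) :
    Nice w (fun y => h1 y - h2 y) where
  diff := n1.diff.sub n2.diff
  bound := by
    obtain ⟨C1, hC1⟩ := n1.bound
    obtain ⟨C2, hC2⟩ := n2.bound
    refine ⟨C1 + C2, fun y => ?_⟩
    rw [fderiv_fun_sub (n1.diff y) (n2.diff y)]
    exact le_trans (norm_sub_le _ _) (add_le_add (hC1 y) (hC2 y))
  escape := by
    intro x
    obtain ⟨T1, hT1⟩ := n1.escape x
    obtain ⟨T2, hT2⟩ := n2.escape x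
    refine ⟨max T1 T2, fun y hy t ht => ?_⟩
    obtain ⟨e1, e1'⟩ := hT1 y hy t (le_trans (le_max_left _ _) ht)
    obtain ⟨e2, e2'⟩ := hT2 y hy t (le_trans (le_max_right _ _) ht)
    constructor
    · rw [e1, e2, sub_zero]
    · rw [fderiv_fun_sub (n1.diff _) (n2.diff _), e1', e2',
        sub_zero]

lemma ray_integrable {p : Pt → ℝ} (hc : Continuous p) (hs : SuppInDisc p)
    {w : Pt} (hw : 0 < w.2) (y : Pt) :
    IntegrableOn (fun t => p (y + t • w)) (Set.Ioi (0 : ℝ)) := by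
  apply integrableOn_tail (hc.comp (by fun_prop)) ((1 + |y.2|) / w.2)
  intro t ht
  apply hs
  have hco : (y + t • w).2 = y.2 + t * w.2 := rfl
  have ht' : 1 + |y.2| ≤ t * w.2 := (div_le_iff₀ hw).1 ht
  rw [hco]
  nlinarith [sq_nonneg ((y + t • w).1), neg_abs_le y.2, sq_nonneg (y.2 + t * w.2 - 1)]

lemma nice_m_beam {p : Pt → ℝ} (hp : ContDiff ℝ 1 p) (hs : SuppInDisc p)
    {w' : Pt} (h1 : |w'.1| ≤ w'.2) (h2 : 0 < w'.2) :
    Nice ((-1 : ℝ), (0 : ℝ)) (Xbeam w' p) := by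
  have np : Nice w' p := nice_of_snd hp hs w' h2
  obtain ⟨C, hC⟩ := np.bound
  have hC0 : 0 ≤ C := le_trans (norm_nonneg _) (hC 0)
  refine ⟨fun y => ((beam_deriv np y).2.differentiableAt), ?_, ?_⟩
  · refine ⟨C * (2 / w'.2), fun y => ?_⟩
    rw [beam_fderiv np y]
    set a := (-1 - y.2) / w'.2 with hadef
    set b := (1 - y.2) / w'.2 with hbdef
    have hab : a ≤ b := by
      rw [hadef, hbdef]
      exact div_le_div_of_nonneg_right (by linarith : (-1:ℝ) - y.2 ≤ 1 - y.2) h2.le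
    have hbd : ∀ t ∈ Set.Ioi (0:ℝ), ‖fderiv ℝ p (y + t • w')‖
        ≤ (Set.Ioo a b).indicator (fun _ => C) t := by
      intro t _
      by_cases hmem : t ∈ Set.Ioo a b
      · rw [Set.indicator_of_mem hmem]; exact hC _
      · rw [Set.indicator_of_notMem hmem]
        have hcoords : (y + t • w').2 = y.2 + t * w'.2 := rfl
        have hz : fderiv ℝ p (y + t • w') = 0 := by
          apply suppInDisc_fderiv hp hs
          rw [Set.mem_Ioo, not_and_or, not_lt, not_lt] at hmem
          rw [hcoords]
          rcases hmem with hta | htb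
          · have hta' : t * w'.2 ≤ -1 - y.2 := by
              rw [hadef] at hta
              exact (le_div_iff₀ h2).1 hta
            nlinarith [sq_nonneg ((y + t • w').1), sq_nonneg (y.2 + t * w'.2 + 1)]
          · have htb' : 1 - y.2 ≤ t * w'.2 := by
              rw [hbdef] at htb
              exact (div_le_iff₀ h2).1 htb
            nlinarith [sq_nonneg ((y + t • w').1), sq_nonneg (y.2 + t * w'.2 - 1)]
        rw [hz]
        simp
    have hindint : Integrable ((Set.Ioo a b).indicator (fun _ => C)) := by
      rw [integrable_indicator_iff measurableSet_Ioo]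
      exact integrableOn_const measure_Ioo_lt_top.ne
    calc ‖∫ t in Set.Ioi (0:ℝ), fderiv ℝ p (y + t • w')‖
        ≤ ∫ t in Set.Ioi (0:ℝ), (Set.Ioo a b).indicator (fun _ => C) t :=
          norm_integral_le_of_norm_le hindint.integrableOn
            ((ae_restrict_iff' measurableSet_Ioi).2 (ae_of_all _ hbd))
      _ ≤ ∫ t, (Set.Ioo a b).indicator (fun _ => C) t :=
          integral_mono_measure Measure.restrict_le_self
            (ae_of_all _ fun t => Set.indicator_nonneg (fun _ _ => hC0) t) hindint
      _ = C * (2 / w'.2) := by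
          rw [integral_indicator_const _ measurableSet_Ioo, Real.volume_real_Ioo_of_le hab, smul_eq_mul]
          rw [hbdef, hadef]
          rw [mul_comm]
          congr 1
          field_simp
          ring
  · intro x
    refine ⟨|x.1| + |x.2| + 5, ?_⟩
    intro y hy t ht
    obtain ⟨hy1, hy2⟩ := ball_coord hy
    have key : ∀ s ∈ Set.Ioi (0 : ℝ),
        1 ≤ ((y + t • ((-1:ℝ),(0:ℝ))) + s • w').1 ^ 2
          + ((y + t • ((-1:ℝ),(0:ℝ))) + s • w').2 ^ 2 := by
      intro s hs'
      have hq1 : ((y + t • ((-1:ℝ),(0:ℝ))) + s • w').1 = y.1 - t + s * w'.1 := by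
        show (y.1 + t * (-1)) + s * w'.1 = _; ring
      have hq2 : ((y + t • ((-1:ℝ),(0:ℝ))) + s • w').2 = y.2 + s * w'.2 := by
        show (y.2 + t * 0) + s * w'.2 = _; ring
      rw [hq1, hq2]
      by_contra hcon
      push_neg at hcon
      have hs0 : (0:ℝ) < s := hs'
      have hw1 : w'.1 ≤ w'.2 := le_trans (le_abs_self _) h1
      have hsw : s * w'.1 ≤ s * w'.2 := mul_le_mul_of_nonneg_left hw1 hs0.le
      have hA : -1 < y.1 - t + s * w'.1 := by
        nlinarith [sq_nonneg (y.2 + s * w'.2), sq_nonneg (y.1 - t + s * w'.1 + 1)]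
      have hB : y.2 + s * w'.2 < 1 := by
        nlinarith [sq_nonneg (y.1 - t + s * w'.1), sq_nonneg (y.2 + s * w'.2 - 1)]
      have hh1 := abs_lt.1 hy1
      have hh2 := abs_lt.1 hy2
      have hx1 := le_abs_self x.1
      have hx2 := neg_abs_le x.2
      linarith
    constructor
    · show (∫ s in Set.Ioi (0:ℝ), p ((y + t • ((-1:ℝ),(0:ℝ))) + s • w')) = 0
      apply integral_eq_zero_of_ae
      exact (ae_restrict_iff' measurableSet_Ioi).2
        (ae_of_all _ fun s hs' => hs _ (key s hs'))
    · rw [beam_fderiv np _]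
      apply integral_eq_zero_of_ae
      exact (ae_restrict_iff' measurableSet_Ioi).2
        (ae_of_all _ fun s hs' => suppInDisc_fderiv hp hs _ (key s hs'))

lemma core (u1 : ℝ) (hu1 : 0 < u1)
    (g : Pt → ℝ) (hg : ContDiff ℝ 2 g) (hs : SuppInDisc g) (x : Pt) :
    Dir (u1, u1) (Dir (-u1, u1) (Xbeam ((-1 : ℝ), (0 : ℝ))
      (fun y => Xbeam (u1, u1) g y - Xbeam (-u1, u1) g y))) x = 2 * u1 * g x := by
  have hg1 : ContDiff ℝ 1 g := hg.of_le (by norm_num)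
  set u : Pt := (u1, u1) with hu_def
  set v : Pt := (-u1, u1) with hv_def
  set m : Pt := ((-1 : ℝ), (0 : ℝ)) with hm_def
  have nu : Nice u g := nice_of_snd hg1 hs u hu1
  have nv : Nice v g := nice_of_snd hg1 hs v hu1
  have nmg : Nice m g := nice_m_of_supp hg1 hs
  set P : Pt → ℝ := fun y => fderiv ℝ g y v with hP_def
  have hP1 : ContDiff ℝ 1 P :=
    (hg.fderiv_right (by norm_num : (1 : WithTop ℕ∞) + 1 ≤ 2)).clm_apply contDiff_const
  have hsP : SuppInDisc P := by
    intro z hz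
    rw [hP_def]
    simp only
    rw [suppInDisc_fderiv hg1 hs z hz]
    simp
  have nP : Nice u P := nice_of_snd hP1 hsP u hu1
  have habs_u : |u.1| ≤ u.2 := by rw [hu_def]; simp [abs_of_pos hu1]
  have habs_v : |v.1| ≤ v.2 := by rw [hv_def]; simp [abs_of_pos hu1]
  have nF : Nice m (fun y => Xbeam u g y - Xbeam v g y) :=
    nice_sub (nice_m_beam hg1 hs habs_u hu1) (nice_m_beam hg1 hs habs_v hu1)
  set Q : Pt → ℝ := fun y => Xbeam u P y + g y with hQ_def
  have nQ : Nice m Q := nice_add (nice_m_beam hP1 hsP habs_u hu1) nmg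
  have id1 : ∀ z : Pt, fderiv ℝ (fun y => Xbeam u g y - Xbeam v g y) z v = Q z := by
    intro z
    rw [fderiv_fun_sub (beam_deriv nu z).2.differentiableAt (beam_deriv nv z).2.differentiableAt,
      ContinuousLinearMap.sub_apply]
    have e1 : fderiv ℝ (Xbeam u g) z v = Xbeam u P z := beam_dir nu v z
    have e2 : fderiv ℝ (Xbeam v g) z v = - g z := beam_dir_self nv z
    rw [e1, e2, hQ_def]
    ring
  have hlin : u - v = (-(2 * u1)) • m := by
    rw [hu_def, hv_def, hm_def]
    have : ((-(2 * u1)) • (((-1 : ℝ), (0 : ℝ)) : Pt)) = ((-(2 * u1)) * (-1), (-(2 * u1)) * 0) :=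
      rfl
    rw [this]
    have : (((u1, u1) : Pt) - (-u1, u1)) = (u1 - -u1, u1 - u1) := rfl
    rw [this, Prod.mk.injEq]
    constructor <;> ring
  have id2 : ∀ z : Pt, fderiv ℝ Q z u = (-(2 * u1)) * (fderiv ℝ g z m) := by
    intro z
    rw [hQ_def]
    rw [fderiv_fun_add (beam_deriv nP z).2.differentiableAt (hg1.differentiable one_ne_zero z),
      ContinuousLinearMap.add_apply]
    have e3 : fderiv ℝ (Xbeam u P) z u = - P z := beam_dir_self nP z
    rw [e3]
    have e4 : -P z + fderiv ℝ g z u = fderiv ℝ g z (u - v) := by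
      rw [map_sub, hP_def]
      ring
    rw [e4, hlin, (fderiv ℝ g z).map_smul, smul_eq_mul]
  have stepA : Dir v (Xbeam m (fun y => Xbeam u g y - Xbeam v g y)) = Xbeam m Q := by
    funext z
    rw [beam_dir nF v z]
    show _ = ∫ s in Set.Ioi (0 : ℝ), Q (z + s • m)
    simp only [id1]
  rw [stepA, beam_dir nQ u x]
  calc ∫ s in Set.Ioi (0 : ℝ), fderiv ℝ Q (x + s • m) u
      = ∫ s in Set.Ioi (0 : ℝ), (-(2 * u1)) * (fderiv ℝ g (x + s • m) m) := by
        simp only [id2]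
    _ = (-(2 * u1)) * ∫ s in Set.Ioi (0 : ℝ), fderiv ℝ g (x + s • m) m :=
        integral_const_mul _ _
    _ = (-(2 * u1)) * (- g x) := by rw [beam_ftc nmg x]
    _ = 2 * u1 * g x := by ring

end VTAux

/-- when `u1 = u2 (= 1/√2)`, the off-diagonal component `f12` and the
difference `f22 - f11` are recovered from `Lf - Tf` and `Mf` respectively. -/
theorem special_case_u1_eq_u2
    (u1 u2 : ℝ) (hu : u1 ^ 2 + u2 ^ 2 = 1) (hu1 : 0 < u1) (hu2 : 0 < u2)
    (heq : u1 = u2)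
    (f11 f12 f22 : ℝ × ℝ → ℝ)
    (h11 : ContDiff ℝ 2 f11) (h12 : ContDiff ℝ 2 f12) (h22 : ContDiff ℝ 2 f22)
    (s11 : SuppInDisc f11) (s12 : SuppInDisc f12) (s22 : SuppInDisc f22)
    (x : ℝ × ℝ) :
    f12 x =
      (1 / (4 * u1)) *
        Dir (u1, u2) (Dir (-u1, u2)
          (Xbeam ((-1 : ℝ), (0 : ℝ))
            (VlineL u1 u2 f11 f12 f22 - VlineT u1 u2 f11 f12 f22))) x ∧
    f22 x - f11 x =
      (1 / u1) *
        Dir (u1, u2) (Dir (-u1, u2)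
          (Xbeam ((-1 : ℝ), (0 : ℝ)) (VlineM u1 u2 f11 f12 f22))) x := by
  subst heq
  have h2sq : 2 * u1 ^ 2 = 1 := by linarith [hu]
  have hne : u1 ≠ 0 := hu1.ne'
  constructor
  · -- first statement
    have cG : ContDiff ℝ 2 (fun z : ℝ × ℝ => 4 * u1 ^ 2 * f12 z) := contDiff_const.mul h12
    have sG : SuppInDisc (fun z : ℝ × ℝ => 4 * u1 ^ 2 * f12 z) := by
      intro z hz
      show 4 * u1 ^ 2 * f12 z = 0
      rw [s12 z hz]; ring
    have cA1 : Continuous fun z : ℝ × ℝ =>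
        u1 ^ 2 * f11 z + 2 * u1 * u1 * f12 z + u1 ^ 2 * f22 z :=
      ((continuous_const.mul h11.continuous).add (continuous_const.mul h12.continuous)).add
        (continuous_const.mul h22.continuous)
    have cA2 : Continuous fun z : ℝ × ℝ =>
        u1 ^ 2 * f11 z - 2 * u1 * u1 * f12 z + u1 ^ 2 * f22 z :=
      ((continuous_const.mul h11.continuous).sub (continuous_const.mul h12.continuous)).add
        (continuous_const.mul h22.continuous)
    have sA : ∀ (c1 c2 c3 : ℝ), SuppInDisc fun z : ℝ × ℝ =>
        c1 * f11 z + c2 * f12 z + c3 * f22 z := by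
      intro c1 c2 c3 z hz
      show c1 * f11 z + c2 * f12 z + c3 * f22 z = 0
      rw [s11 z hz, s12 z hz, s22 z hz]; ring
    have sA1 : SuppInDisc fun z : ℝ × ℝ =>
        u1 ^ 2 * f11 z + 2 * u1 * u1 * f12 z + u1 ^ 2 * f22 z := by
      intro z hz
      show u1 ^ 2 * f11 z + 2 * u1 * u1 * f12 z + u1 ^ 2 * f22 z = 0
      rw [s11 z hz, s12 z hz, s22 z hz]; ring
    have sA2 : SuppInDisc fun z : ℝ × ℝ =>
        u1 ^ 2 * f11 z - 2 * u1 * u1 * f12 z + u1 ^ 2 * f22 z := by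
      intro z hz
      show u1 ^ 2 * f11 z - 2 * u1 * u1 * f12 z + u1 ^ 2 * f22 z = 0
      rw [s11 z hz, s12 z hz, s22 z hz]; ring
    have cB1 : Continuous fun z : ℝ × ℝ =>
        u1 ^ 2 * f11 z - 2 * u1 * u1 * f12 z + u1 ^ 2 * f22 z := cA2
    have cB2 : Continuous fun z : ℝ × ℝ =>
        u1 ^ 2 * f11 z + 2 * u1 * u1 * f12 z + u1 ^ 2 * f22 z := cA1
    have E1 : VlineL u1 u1 f11 f12 f22 - VlineT u1 u1 f11 f12 f22
        = fun y => Xbeam (u1, u1) (fun z => 4 * u1 ^ 2 * f12 z) y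
            - Xbeam (-u1, u1) (fun z => 4 * u1 ^ 2 * f12 z) y := by
      funext y
      have I1 := VTAux.ray_integrable cA1 sA1 (w := ((u1, u1) : ℝ × ℝ)) hu1 y
      have I2 := VTAux.ray_integrable cA2 sA2 (w := ((u1, u1) : ℝ × ℝ)) hu1 y
      have I3 := VTAux.ray_integrable cA2 sA2 (w := ((-u1, u1) : ℝ × ℝ)) hu1 y
      have I4 := VTAux.ray_integrable cA1 sA1 (w := ((-u1, u1) : ℝ × ℝ)) hu1 y
      show (VlineL u1 u1 f11 f12 f22) y - (VlineT u1 u1 f11 f12 f22) y = _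
      unfold VlineL VlineT Xbeam
      simp only [Pi.add_apply]
      have hA : (∫ t in Set.Ioi (0:ℝ), (u1 ^ 2 * f11 (y + t • ((u1, u1) : ℝ × ℝ))
              + 2 * u1 * u1 * f12 (y + t • ((u1, u1) : ℝ × ℝ))
              + u1 ^ 2 * f22 (y + t • ((u1, u1) : ℝ × ℝ))))
          - (∫ t in Set.Ioi (0:ℝ), (u1 ^ 2 * f11 (y + t • ((u1, u1) : ℝ × ℝ))
              - 2 * u1 * u1 * f12 (y + t • ((u1, u1) : ℝ × ℝ))
              + u1 ^ 2 * f22 (y + t • ((u1, u1) : ℝ × ℝ))))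
          = ∫ t in Set.Ioi (0:ℝ), 4 * u1 ^ 2 * f12 (y + t • ((u1, u1) : ℝ × ℝ)) := by
        rw [← MeasureTheory.integral_sub I1 I2]
        apply MeasureTheory.integral_congr_ae
        apply MeasureTheory.ae_of_all
        intro t
        ring
      have hB : (∫ t in Set.Ioi (0:ℝ), (u1 ^ 2 * f11 (y + t • ((-u1, u1) : ℝ × ℝ))
              - 2 * u1 * u1 * f12 (y + t • ((-u1, u1) : ℝ × ℝ))
              + u1 ^ 2 * f22 (y + t • ((-u1, u1) : ℝ × ℝ))))
          - (∫ t in Set.Ioi (0:ℝ), (u1 ^ 2 * f11 (y + t • ((-u1, u1) : ℝ × ℝ))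
              + 2 * u1 * u1 * f12 (y + t • ((-u1, u1) : ℝ × ℝ))
              + u1 ^ 2 * f22 (y + t • ((-u1, u1) : ℝ × ℝ))))
          = - ∫ t in Set.Ioi (0:ℝ), 4 * u1 ^ 2 * f12 (y + t • ((-u1, u1) : ℝ × ℝ)) := by
        rw [← MeasureTheory.integral_sub I3 I4, ← MeasureTheory.integral_neg]
        apply MeasureTheory.integral_congr_ae
        apply MeasureTheory.ae_of_all
        intro t
        ring
      linarith [hA, hB]
    rw [E1, VTAux.core u1 hu1 (fun z => 4 * u1 ^ 2 * f12 z) cG sG x]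
    show f12 x = 1 / (4 * u1) * (2 * u1 * (4 * u1 ^ 2 * f12 x))
    field_simp
    linear_combination (-1) * f12 x * h2sq
  · -- second statement
    have cD : ContDiff ℝ 2 (fun z : ℝ × ℝ => u1 ^ 2 * (f22 z - f11 z)) :=
      contDiff_const.mul (h22.sub h11)
    have sD : SuppInDisc (fun z : ℝ × ℝ => u1 ^ 2 * (f22 z - f11 z)) := by
      intro z hz
      show u1 ^ 2 * (f22 z - f11 z) = 0
      rw [s11 z hz, s22 z hz]; ring
    have E2 : VlineM u1 u1 f11 f12 f22
        = fun y => Xbeam (u1, u1) (fun z => u1 ^ 2 * (f22 z - f11 z)) y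
            - Xbeam (-u1, u1) (fun z => u1 ^ 2 * (f22 z - f11 z)) y := by
      funext y
      show (VlineM u1 u1 f11 f12 f22) y = _
      unfold VlineM Xbeam
      simp only [Pi.add_apply]
      have e1 : (∫ t in Set.Ioi (0:ℝ),
          (fun z => -(u1 * u1) * f11 z + (u1 ^ 2 - u1 ^ 2) * f12 z + u1 * u1 * f22 z)
            (y + t • ((u1, u1) : ℝ × ℝ)))
          = ∫ t in Set.Ioi (0:ℝ),
          (fun z => u1 ^ 2 * (f22 z - f11 z)) (y + t • ((u1, u1) : ℝ × ℝ)) := by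
        apply MeasureTheory.integral_congr_ae
        apply MeasureTheory.ae_of_all
        intro t
        simp only
        ring
      have e2 : (∫ t in Set.Ioi (0:ℝ),
          (fun z => u1 * u1 * f11 z + (u1 ^ 2 - u1 ^ 2) * f12 z - u1 * u1 * f22 z)
            (y + t • ((-u1, u1) : ℝ × ℝ)))
          = - ∫ t in Set.Ioi (0:ℝ),
          (fun z => u1 ^ 2 * (f22 z - f11 z)) (y + t • ((-u1, u1) : ℝ × ℝ)) := by
        rw [← MeasureTheory.integral_neg]
        apply MeasureTheory.integral_congr_ae
        apply MeasureTheory.ae_of_all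
        intro t
        simp only
        ring
      rw [e1, e2]
      ring
    rw [E2, VTAux.core u1 hu1 (fun z => u1 ^ 2 * (f22 z - f11 z)) cD sD x]
    show f22 x - f11 x = 1 / u1 * (2 * u1 * (u1 ^ 2 * (f22 x - f11 x)))
    field_simp
    linear_combination (-1) * (f22 x - f11 x) * h2sq
end
end

section
/- Let f = (f11, f12, f22) ∈ C²_c(S²; D1). Then Lf(x) = 0 for all x ∈ ℝ² if and only if there exists a continuously differentiable function φ : ℝ² → ℝ with gradient ∇φ = (u1² f11 + u2² f22, 2 u1² f12) on ℝ². (Kernel description of the longitudinal V-line transform.) -/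
noncomputable section

open MeasureTheory

namespace VL
open Set Filter

lemma zero_of_snd {h : ℝ × ℝ → ℝ} (hs : SuppInDisc h) {y : ℝ × ℝ} (hy : 1 ≤ y.2) : h y = 0 :=
  hs y (by nlinarith [sq_nonneg y.1])

lemma clm_decomp (L : ℝ × ℝ →L[ℝ] ℝ) (y : ℝ × ℝ) :
    L y = y.1 * L ((1 : ℝ), (0 : ℝ)) + y.2 * L ((0 : ℝ), (1 : ℝ)) := by
  have hy : y = y.1 • ((1:ℝ),(0:ℝ)) + y.2 • ((0:ℝ),(1:ℝ)) := by
    ext <;> simp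
  conv_lhs => rw [hy]
  rw [map_add, _root_.map_smul, _root_.map_smul, smul_eq_mul, smul_eq_mul]

lemma snd_add_smul (x w : ℝ × ℝ) (t : ℝ) : (x + t • w).2 = x.2 + t * w.2 := by simp

lemma snd_ray {x₀ x w : ℝ × ℝ} (hw : 0 < w.2) (hx : |x.2 - x₀.2| ≤ 1) {t : ℝ}
    (ht : (3 - x₀.2) / w.2 ≤ t) : 1 < (x + t • w).2 := by
  have h1 : 3 - x₀.2 ≤ t * w.2 := (div_le_iff₀ hw).mp ht
  rw [snd_add_smul]
  rcases abs_le.mp hx with ⟨h2, _⟩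
  linarith

lemma integrableOn_ray {E : Type*} [NormedAddCommGroup E] {g : ℝ × ℝ → E} (hg : Continuous g)
    (x w : ℝ × ℝ) {T : ℝ} (hz : ∀ t, T ≤ t → g (x + t • w) = 0) :
    IntegrableOn (fun t => g (x + t • w)) (Ioi (0 : ℝ)) := by
  set T' := max T 0 with hT'
  have hcont : Continuous fun t : ℝ => g (x + t • w) :=
    hg.comp (continuous_const.add (continuous_id.smul continuous_const))
  have h1 : IntegrableOn (fun t => g (x + t • w)) (Ioc (0 : ℝ) T') volume :=
    hcont.integrableOn_Ioc
  have h2 : IntegrableOn (fun t => g (x + t • w)) (Ioi T') volume := by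
    exact (integrableOn_zero).congr_fun
      (fun t ht => (hz t (le_trans (le_max_left _ _) ht.le)).symm) measurableSet_Ioi
  refine (h1.union h2).mono_set (fun t ht => ?_)
  rcases le_or_gt t T' with hle | hlt
  · exact Or.inl ⟨ht, hle⟩
  · exact Or.inr hlt

lemma ftc_ray {φ : ℝ × ℝ → ℝ} (hφ : ContDiff ℝ 1 φ) (x w : ℝ × ℝ) {c : ℝ}
    (hlim : ∀ᶠ (t : ℝ) in atTop, φ (x + t • w) = c)
    (hint : IntegrableOn (fun t => fderiv ℝ φ (x + t • w) w) (Ioi (0 : ℝ))) :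
    ∫ t in Ioi (0 : ℝ), fderiv ℝ φ (x + t • w) w = c - φ x := by
  have hderiv : ∀ t ∈ Ici (0:ℝ), HasDerivAt (fun s => φ (x + s • w))
      (fderiv ℝ φ (x + t • w) w) t := by
    intro t _
    have hline : HasDerivAt (fun s : ℝ => x + s • w) w t := by
      simpa using ((hasDerivAt_id t).smul_const w).const_add x
    exact ((hφ.differentiable one_ne_zero (x + t • w)).hasFDerivAt).comp_hasDerivAt t hline
  have htend : Tendsto (fun t : ℝ => φ (x + t • w)) atTop (nhds c) :=
    tendsto_const_nhds.congr' (hlim.mono fun t ht => ht.symm)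
  have := integral_Ioi_of_hasDerivAt_of_tendsto' hderiv hint htend
  simpa using this

end VL

namespace VL
open Set Filter

lemma fderiv_zero_of_snd {h : ℝ × ℝ → ℝ} (hs : SuppInDisc h) {y : ℝ × ℝ} (hy : 1 < y.2) :
    fderiv ℝ h y = 0 := by
  have hmem : {p : ℝ × ℝ | 1 < p.2} ∈ nhds y :=
    (isOpen_lt continuous_const continuous_snd).mem_nhds hy
  have hev : h =ᶠ[nhds y] fun _ => (0 : ℝ) := by
    filter_upwards [hmem] with p hp
    exact zero_of_snd hs hp.le
  rw [hev.fderiv_eq]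
  simp

lemma hasCompactSupport {h : ℝ × ℝ → ℝ} (hs : SuppInDisc h) : HasCompactSupport h := by
  apply HasCompactSupport.intro (isCompact_closedBall (0 : ℝ × ℝ) 1)
  intro x hx
  rw [Metric.mem_closedBall, dist_zero_right, Prod.norm_def] at hx
  push_neg at hx
  rcases lt_max_iff.mp hx with h1 | h1
  · exact hs x (by rw [Real.norm_eq_abs] at h1; nlinarith [sq_nonneg x.2, sq_abs x.1])
  · exact hs x (by rw [Real.norm_eq_abs] at h1; nlinarith [sq_nonneg x.1, sq_abs x.2])

lemma xbeam_hasFDerivAt {h : ℝ × ℝ → ℝ} (hh : ContDiff ℝ 2 h) (hs : SuppInDisc h)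
    {w : ℝ × ℝ} (hw : 0 < w.2) (x₀ : ℝ × ℝ) :
    HasFDerivAt (Xbeam w h) (∫ t in Set.Ioi (0 : ℝ), fderiv ℝ h (x₀ + t • w)) x₀ := by
  have hfc : Continuous (fderiv ℝ h) := hh.continuous_fderiv two_ne_zero
  obtain ⟨C, hC⟩ := (((hasCompactSupport hs).fderiv (𝕜 := ℝ))).exists_bound_of_continuous hfc
  set T : ℝ := max 0 ((3 - x₀.2) / w.2) with hT
  set bound : ℝ → ℝ := Set.indicator (Set.Icc 0 T) (fun _ => max C 0) with hbd
  have key : ∀ t ∈ Set.Ioi (0:ℝ), ∀ x ∈ Metric.ball x₀ 1,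
      ‖fderiv ℝ h (x + t • w)‖ ≤ bound t := by
    intro t ht x hx
    rcases le_or_gt t T with hle | hlt
    · have : bound t = max C 0 :=
        Set.indicator_of_mem (show t ∈ Set.Icc 0 T from ⟨ht.out.le, hle⟩) _
      rw [this]
      exact le_trans (hC _) (le_max_left _ _)
    · have hx2 : |x.2 - x₀.2| ≤ 1 := by
        have := norm_snd_le (x - x₀)
        rw [Metric.mem_ball, dist_eq_norm] at hx
        simpa [Real.norm_eq_abs] using le_trans this hx.le
      have h0 : fderiv ℝ h (x + t • w) = 0 :=
        fderiv_zero_of_snd hs (snd_ray hw hx2 (le_trans (le_max_right _ _) hlt.le))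
      rw [h0]
      simp only [norm_zero]
      exact Set.indicator_nonneg (fun _ _ => le_max_right _ _) _
  have bound_int : Integrable bound (volume.restrict (Set.Ioi (0:ℝ))) := by
    have h1 : IntegrableOn (fun _ : ℝ => max C 0) (Set.Icc 0 T) volume :=
      integrableOn_const measure_Icc_lt_top.ne
    exact (h1.integrable_indicator measurableSet_Icc).restrict
  show HasFDerivAt (fun x => ∫ t in Set.Ioi (0:ℝ), h (x + t • w)) _ x₀
  refine hasFDerivAt_integral_of_dominated_of_fderiv_le (s := Metric.ball x₀ 1)
    (F := fun x t => h (x + t • w)) (F' := fun x t => fderiv ℝ h (x + t • w))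
    (bound := bound) (Metric.ball_mem_nhds x₀ one_pos) ?_ ?_ ?_ ?_ bound_int ?_
  · exact Filter.Eventually.of_forall fun x =>
      ((hh.continuous.comp
        (continuous_const.add (continuous_id.smul continuous_const)))).aestronglyMeasurable
  · exact integrableOn_ray hh.continuous x₀ w (T := T)
      (fun t ht => zero_of_snd hs (snd_ray hw (by simp) (le_trans (le_max_right _ _) ht)).le)
  · exact (hfc.comp
      (continuous_const.add (continuous_id.smul continuous_const))).aestronglyMeasurable
  · filter_upwards [ae_restrict_mem measurableSet_Ioi] with t ht
    exact fun x hx => key t ht x hx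
  · refine Filter.Eventually.of_forall fun t => fun x _ => ?_
    have h1 : HasFDerivAt (fun y : ℝ × ℝ => y + t • w) (ContinuousLinearMap.id ℝ (ℝ × ℝ)) x :=
      (hasFDerivAt_id x).add_const (t • w)
    have h2 := (hh.differentiable two_ne_zero (x + t • w)).hasFDerivAt
    have h3 := h2.comp x h1
    rw [ContinuousLinearMap.comp_id] at h3
    exact h3

lemma xbeam_fderiv {h : ℝ × ℝ → ℝ} (hh : ContDiff ℝ 2 h) (hs : SuppInDisc h)
    {w : ℝ × ℝ} (hw : 0 < w.2) (x : ℝ × ℝ) :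
    fderiv ℝ (Xbeam w h) x = ∫ t in Set.Ioi (0 : ℝ), fderiv ℝ h (x + t • w) :=
  (xbeam_hasFDerivAt hh hs hw x).fderiv

lemma xbeam_contDiff {h : ℝ × ℝ → ℝ} (hh : ContDiff ℝ 2 h) (hs : SuppInDisc h)
    {w : ℝ × ℝ} (hw : 0 < w.2) : ContDiff ℝ 1 (Xbeam w h) := by
  have hfc : Continuous (fderiv ℝ h) := hh.continuous_fderiv two_ne_zero
  obtain ⟨C, hC⟩ := (((hasCompactSupport hs).fderiv (𝕜 := ℝ))).exists_bound_of_continuous hfc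
  rw [contDiff_one_iff_fderiv]
  refine ⟨fun x => (xbeam_hasFDerivAt hh hs hw x).differentiableAt, ?_⟩
  have heq : fderiv ℝ (Xbeam w h) = fun x => ∫ t in Set.Ioi (0 : ℝ), fderiv ℝ h (x + t • w) :=
    funext fun x => xbeam_fderiv hh hs hw x
  rw [heq, continuous_iff_continuousAt]
  intro x₀
  set T : ℝ := max 0 ((3 - x₀.2) / w.2) with hT
  set bound : ℝ → ℝ := Set.indicator (Set.Icc 0 T) (fun _ => max C 0) with hbd
  have key : ∀ t ∈ Set.Ioi (0:ℝ), ∀ x ∈ Metric.ball x₀ 1,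
      ‖fderiv ℝ h (x + t • w)‖ ≤ bound t := by
    intro t ht x hx
    rcases le_or_gt t T with hle | hlt
    · have : bound t = max C 0 :=
        Set.indicator_of_mem (show t ∈ Set.Icc 0 T from ⟨ht.out.le, hle⟩) _
      rw [this]
      exact le_trans (hC _) (le_max_left _ _)
    · have hx2 : |x.2 - x₀.2| ≤ 1 := by
        have := norm_snd_le (x - x₀)
        rw [Metric.mem_ball, dist_eq_norm] at hx
        simpa [Real.norm_eq_abs] using le_trans this hx.le
      have h0 : fderiv ℝ h (x + t • w) = 0 :=
        fderiv_zero_of_snd hs (snd_ray hw hx2 (le_trans (le_max_right _ _) hlt.le))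
      rw [h0]
      simp only [norm_zero]
      exact Set.indicator_nonneg (fun _ _ => le_max_right _ _) _
  have bound_int : Integrable bound (volume.restrict (Set.Ioi (0:ℝ))) := by
    have h1 : IntegrableOn (fun _ : ℝ => max C 0) (Set.Icc 0 T) volume :=
      integrableOn_const measure_Icc_lt_top.ne
    exact (h1.integrable_indicator measurableSet_Icc).restrict
  refine continuousAt_of_dominated (bound := bound) ?_ ?_ bound_int ?_
  · exact Filter.Eventually.of_forall fun x =>
      (hfc.comp (continuous_const.add (continuous_id.smul continuous_const))).aestronglyMeasurable
  · filter_upwards [Metric.ball_mem_nhds x₀ one_pos] with x hx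
    filter_upwards [ae_restrict_mem measurableSet_Ioi] with t ht
    exact key t ht x hx
  · exact Filter.Eventually.of_forall fun t =>
      (hfc.comp (continuous_id.add continuous_const)).continuousAt

lemma xbeam_fderiv_apply_self {h : ℝ × ℝ → ℝ} (hh : ContDiff ℝ 2 h) (hs : SuppInDisc h)
    {w : ℝ × ℝ} (hw : 0 < w.2) (x : ℝ × ℝ) :
    fderiv ℝ (Xbeam w h) x w = -h x := by
  have hfc : Continuous (fderiv ℝ h) := hh.continuous_fderiv two_ne_zero
  have hz : ∀ t, max 0 ((3 - x.2) / w.2) ≤ t → fderiv ℝ h (x + t • w) = 0 := fun t ht =>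
    fderiv_zero_of_snd hs (snd_ray hw (by simp) (le_trans (le_max_right _ _) ht))
  have hint : IntegrableOn (fun t => fderiv ℝ h (x + t • w)) (Set.Ioi (0:ℝ)) :=
    integrableOn_ray hfc x w hz
  rw [xbeam_fderiv hh hs hw x, ContinuousLinearMap.integral_apply hint w]
  have hint2 : IntegrableOn (fun t => fderiv ℝ h (x + t • w) w) (Set.Ioi (0:ℝ)) := by
    have hcw : Continuous fun y : ℝ × ℝ => fderiv ℝ h y w :=
      (ContinuousLinearMap.apply ℝ ℝ w).continuous.comp hfc
    exact integrableOn_ray hcw x w (fun t ht => by rw [hz t ht]; rfl)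
  have hlim : ∀ᶠ (t : ℝ) in Filter.atTop, h (x + t • w) = 0 := by
    filter_upwards [Filter.Ici_mem_atTop (max 0 ((3 - x.2) / w.2))] with t ht
    exact zero_of_snd hs (snd_ray hw (by simp) (le_trans (le_max_right _ _) ht)).le
  have := ftc_ray (hh.of_le one_le_two) x w hlim hint2
  rw [this]
  ring

end VL

/-- kernel description of the longitudinal V-line transform. -/
theorem kernel_longitudinal
    (u1 u2 : ℝ) (hu : u1 ^ 2 + u2 ^ 2 = 1) (hu1 : 0 < u1) (hu2 : 0 < u2)
    (f11 f12 f22 : ℝ × ℝ → ℝ)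
    (h11 : ContDiff ℝ 2 f11) (h12 : ContDiff ℝ 2 f12) (h22 : ContDiff ℝ 2 f22)
    (s11 : SuppInDisc f11) (s12 : SuppInDisc f12) (s22 : SuppInDisc f22) :
    (∀ x : ℝ × ℝ, VlineL u1 u2 f11 f12 f22 x = 0) ↔
      ∃ φ : ℝ × ℝ → ℝ, ContDiff ℝ 1 φ ∧
        ∀ x : ℝ × ℝ,
          fderiv ℝ φ x ((1 : ℝ), (0 : ℝ)) = u1 ^ 2 * f11 x + u2 ^ 2 * f22 x ∧
          fderiv ℝ φ x ((0 : ℝ), (1 : ℝ)) = 2 * u1 ^ 2 * f12 x := by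
  have hgp2 : ContDiff ℝ 2 (fun y => u1 ^ 2 * f11 y + 2 * u1 * u2 * f12 y + u2 ^ 2 * f22 y) :=
    ((contDiff_const.mul h11).add (contDiff_const.mul h12)).add (contDiff_const.mul h22)
  have hgm2 : ContDiff ℝ 2 (fun y => u1 ^ 2 * f11 y - 2 * u1 * u2 * f12 y + u2 ^ 2 * f22 y) :=
    ((contDiff_const.mul h11).sub (contDiff_const.mul h12)).add (contDiff_const.mul h22)
  have hgps : SuppInDisc (fun y => u1 ^ 2 * f11 y + 2 * u1 * u2 * f12 y + u2 ^ 2 * f22 y) :=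
    fun y hy => by simp only [s11 y hy, s12 y hy, s22 y hy]; ring
  have hgms : SuppInDisc (fun y => u1 ^ 2 * f11 y - 2 * u1 * u2 * f12 y + u2 ^ 2 * f22 y) :=
    fun y hy => by simp only [s11 y hy, s12 y hy, s22 y hy]; ring
  have hwu : (0 : ℝ) < ((u1, u2) : ℝ × ℝ).2 := hu2
  have hwv : (0 : ℝ) < ((-u1, u2) : ℝ × ℝ).2 := hu2
  constructor
  · intro hL
    have hL' : ∀ z, Xbeam (u1, u2) (fun y => u1 ^ 2 * f11 y + 2 * u1 * u2 * f12 y + u2 ^ 2 * f22 y) z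
        + Xbeam (-u1, u2) (fun y => u1 ^ 2 * f11 y - 2 * u1 * u2 * f12 y + u2 ^ 2 * f22 y) z = 0 :=
      fun z => hL z
    have hnegeq : Xbeam (u1, u2) (fun y => u1 ^ 2 * f11 y + 2 * u1 * u2 * f12 y + u2 ^ 2 * f22 y)
        = fun z => - Xbeam (-u1, u2)
            (fun y => u1 ^ 2 * f11 y - 2 * u1 * u2 * f12 y + u2 ^ 2 * f22 y) z :=
      funext fun z => by linarith [hL' z]
    refine ⟨fun z => -u1 * Xbeam (u1, u2)
        (fun y => u1 ^ 2 * f11 y + 2 * u1 * u2 * f12 y + u2 ^ 2 * f22 y) z,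
      contDiff_const.mul (VL.xbeam_contDiff hgp2 hgps hwu), fun x => ?_⟩
    set L := fderiv ℝ (Xbeam (u1, u2)
        (fun y => u1 ^ 2 * f11 y + 2 * u1 * u2 * f12 y + u2 ^ 2 * f22 y)) x with hLdef
    have e_u : L (u1, u2) = -(u1 ^ 2 * f11 x + 2 * u1 * u2 * f12 x + u2 ^ 2 * f22 x) := by
      have := VL.xbeam_fderiv_apply_self hgp2 hgps hwu x
      rw [hLdef, this]
    have e_v : L (-u1, u2) = u1 ^ 2 * f11 x - 2 * u1 * u2 * f12 x + u2 ^ 2 * f22 x := by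
      have hv := VL.xbeam_fderiv_apply_self hgm2 hgms hwv x
      rw [hLdef, hnegeq, fderiv_fun_neg]
      simp only [ContinuousLinearMap.neg_apply]
      rw [hv]
      ring
    have hd1 := VL.clm_decomp L (u1, u2)
    have hd2 := VL.clm_decomp L (-u1, u2)
    simp only [] at hd1 hd2
    have E1 : u1 * L ((1:ℝ),(0:ℝ)) + u2 * L ((0:ℝ),(1:ℝ))
        = -(u1 ^ 2 * f11 x + 2 * u1 * u2 * f12 x + u2 ^ 2 * f22 x) := by
      rw [← e_u, hd1]
    have E2 : -u1 * L ((1:ℝ),(0:ℝ)) + u2 * L ((0:ℝ),(1:ℝ))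
        = u1 ^ 2 * f11 x - 2 * u1 * u2 * f12 x + u2 ^ 2 * f22 x := by
      rw [← e_v, hd2]
    have hdiffU : DifferentiableAt ℝ (Xbeam (u1, u2)
        (fun y => u1 ^ 2 * f11 y + 2 * u1 * u2 * f12 y + u2 ^ 2 * f22 y)) x :=
      (VL.xbeam_hasFDerivAt hgp2 hgps hwu x).differentiableAt
    have hdphi : fderiv ℝ (fun z => -u1 * Xbeam (u1, u2)
        (fun y => u1 ^ 2 * f11 y + 2 * u1 * u2 * f12 y + u2 ^ 2 * f22 y) z) x
        = (-u1) • L := by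
      rw [hLdef]
      exact fderiv_const_mul hdiffU (-u1)
    constructor
    · rw [hdphi]
      simp only [ContinuousLinearMap.smul_apply, smul_eq_mul]
      linear_combination (-1/2 : ℝ) * E1 + (1/2 : ℝ) * E2
    · rw [hdphi]
      simp only [ContinuousLinearMap.smul_apply, smul_eq_mul]
      have hB : L ((0:ℝ),(1:ℝ)) = -2 * u1 * f12 x := by
        refine mul_left_cancel₀ (ne_of_gt hu2) ?_
        linear_combination (1/2 : ℝ) * E1 + (1/2 : ℝ) * E2
      rw [hB]
      ring
  · rintro ⟨φ, hφ, hgrad⟩ x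
    have hφdiff : Differentiable ℝ φ := hφ.differentiable one_ne_zero
    have hfdc : Continuous (fderiv ℝ φ) := (contDiff_one_iff_fderiv.mp hφ).2
    have hfzero : ∀ y : ℝ × ℝ, 1 ≤ y.2 → fderiv ℝ φ y = 0 := by
      intro y hy
      have hy' : 1 ≤ y.1 ^ 2 + y.2 ^ 2 := by nlinarith [sq_nonneg y.1]
      apply ContinuousLinearMap.ext
      intro z
      rw [VL.clm_decomp (fderiv ℝ φ y) z, (hgrad y).1, (hgrad y).2,
        s11 y hy', s12 y hy', s22 y hy']
      simp
    have hconv : Convex ℝ {p : ℝ × ℝ | 1 ≤ p.2} := by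
      intro p hp q hq a b ha hb hab
      simp only [Set.mem_setOf_eq] at *
      have hc : (a • p + b • q).2 = a * p.2 + b * q.2 := by simp
      rw [hc]
      nlinarith
    have hconst : ∀ y : ℝ × ℝ, 1 ≤ y.2 → φ y = φ ((0 : ℝ), (2 : ℝ)) := by
      intro y hy
      have hmv := hconv.norm_image_sub_le_of_norm_hasFDerivWithin_le
        (f := φ) (f' := fun _ => (0 : ℝ × ℝ →L[ℝ] ℝ)) (C := 0)
        (fun z hz => by
          have := (hφdiff z).hasFDerivAt
          rw [hfzero z hz] at this
          exact this.hasFDerivWithinAt)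
        (fun z _ => by simp) (show y ∈ {p : ℝ × ℝ | 1 ≤ p.2} from hy)
        (show ((0:ℝ),(2:ℝ)) ∈ {p : ℝ × ℝ | 1 ≤ p.2} by norm_num)
      have : ‖φ ((0:ℝ),(2:ℝ)) - φ y‖ ≤ 0 := by simpa using hmv
      have h0 : φ ((0:ℝ),(2:ℝ)) - φ y = 0 := by
        have := norm_eq_zero.mp (le_antisymm this (norm_nonneg _))
        exact this
      linarith
    set c : ℝ := φ ((0 : ℝ), (2 : ℝ)) with hc
    -- branch along (u1, u2)
    have hbranch : ∀ w : ℝ × ℝ, 0 < w.2 → ∀ d : ℝ, (∀ y, fderiv ℝ φ y w = d * (u1 ^ 2 * f11 y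
        + u2 ^ 2 * f22 y) + w.2 * (2 * u1 ^ 2 * f12 y)) → True := fun _ _ _ _ => trivial
    have key : ∀ w : ℝ × ℝ, 0 < w.2 →
        ∫ t in Set.Ioi (0:ℝ), fderiv ℝ φ (x + t • w) w = c - φ x := by
      intro w hw
      have hlim : ∀ᶠ (t : ℝ) in Filter.atTop, φ (x + t • w) = c := by
        filter_upwards [Filter.Ici_mem_atTop (max 0 ((3 - x.2) / w.2))] with t ht
        exact hconst _ (VL.snd_ray hw (by simp) (le_trans (le_max_right _ _) ht)).le
      have hint : IntegrableOn (fun t => fderiv ℝ φ (x + t • w) w) (Set.Ioi (0:ℝ)) := by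
        have hcw : Continuous fun y : ℝ × ℝ => fderiv ℝ φ y w :=
          (ContinuousLinearMap.apply ℝ ℝ w).continuous.comp hfdc
        refine VL.integrableOn_ray hcw x w (T := max 0 ((3 - x.2) / w.2)) (fun t ht => ?_)
        rw [hfzero _ (VL.snd_ray hw (by simp) (le_trans (le_max_right _ _) ht)).le]
        rfl
      exact VL.ftc_ray hφ x w hlim hint
    have hptu : ∀ y : ℝ × ℝ, fderiv ℝ φ y (u1, u2)
        = u1 * (u1 ^ 2 * f11 y + 2 * u1 * u2 * f12 y + u2 ^ 2 * f22 y) := by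
      intro y
      rw [VL.clm_decomp (fderiv ℝ φ y) (u1, u2), (hgrad y).1, (hgrad y).2]
      ring
    have hptv : ∀ y : ℝ × ℝ, fderiv ℝ φ y (-u1, u2)
        = -u1 * (u1 ^ 2 * f11 y - 2 * u1 * u2 * f12 y + u2 ^ 2 * f22 y) := by
      intro y
      rw [VL.clm_decomp (fderiv ℝ φ y) (-u1, u2), (hgrad y).1, (hgrad y).2]
      ring
    have hXu : u1 * Xbeam (u1, u2)
        (fun y => u1 ^ 2 * f11 y + 2 * u1 * u2 * f12 y + u2 ^ 2 * f22 y) x = c - φ x := by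
      have h1 := key (u1, u2) hwu
      rw [show (fun t : ℝ => fderiv ℝ φ (x + t • ((u1 : ℝ), (u2 : ℝ))) ((u1 : ℝ), (u2 : ℝ)))
          = fun t : ℝ => u1 * (u1 ^ 2 * f11 (x + t • ((u1:ℝ),(u2:ℝ)))
            + 2 * u1 * u2 * f12 (x + t • ((u1:ℝ),(u2:ℝ)))
            + u2 ^ 2 * f22 (x + t • ((u1:ℝ),(u2:ℝ)))) from funext fun t => hptu _] at h1
      rw [MeasureTheory.integral_const_mul] at h1
      exact h1
    have hXv : -u1 * Xbeam (-u1, u2)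
        (fun y => u1 ^ 2 * f11 y - 2 * u1 * u2 * f12 y + u2 ^ 2 * f22 y) x = c - φ x := by
      have h1 := key (-u1, u2) hwv
      rw [show (fun t : ℝ => fderiv ℝ φ (x + t • ((-u1 : ℝ), (u2 : ℝ))) ((-u1 : ℝ), (u2 : ℝ)))
          = fun t : ℝ => -u1 * (u1 ^ 2 * f11 (x + t • ((-u1:ℝ),(u2:ℝ)))
            - 2 * u1 * u2 * f12 (x + t • ((-u1:ℝ),(u2:ℝ)))
            + u2 ^ 2 * f22 (x + t • ((-u1:ℝ),(u2:ℝ)))) from funext fun t => hptv _] at h1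
      rw [MeasureTheory.integral_const_mul] at h1
      exact h1
    show Xbeam (u1, u2) (fun y => u1 ^ 2 * f11 y + 2 * u1 * u2 * f12 y + u2 ^ 2 * f22 y) x
        + Xbeam (-u1, u2) (fun y => u1 ^ 2 * f11 y - 2 * u1 * u2 * f12 y + u2 ^ 2 * f22 y) x = 0
    have hne : u1 ≠ 0 := ne_of_gt hu1
    apply mul_left_cancel₀ hne
    linear_combination hXu - hXv
end
end

section
/- Let f = (f11, f12, f22) ∈ C²_c(S²; D1). Then Tf(x) = 0 for all x ∈ ℝ² if and only if there exists a continuously differentiable function φ : ℝ² → ℝ with gradient ∇φ = (u2² f11 + u1² f22, −2 u1² f12) on ℝ². (Kernel description of the transverse V-line transform.) -/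
noncomputable section

open MeasureTheory

namespace TVL

open Set MeasureTheory

lemma snd_add_smul (x w : ℝ × ℝ) (t : ℝ) : (x + t • w).2 = x.2 + t * w.2 := rfl

lemma one_lt_of_two_le {y : ℝ × ℝ} (hy : 2 ≤ y.2) : 1 < y.1 ^ 2 + y.2 ^ 2 := by
  nlinarith [sq_nonneg y.1]

lemma Tpos (x : ℝ × ℝ) {w2 : ℝ} (hw2 : 0 < w2) : 0 < (3 + |x.2|) / w2 :=
  div_pos (by positivity) hw2

lemma escape (x : ℝ × ℝ) (w : ℝ × ℝ) (hw2 : 0 < w.2) {t : ℝ}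
    (ht : (3 + |x.2|) / w.2 ≤ t) : 2 ≤ (x + t • w).2 := by
  rw [snd_add_smul]
  have h1 : 3 + |x.2| ≤ t * w.2 := (div_le_iff₀ hw2).mp ht
  have h2 := neg_abs_le x.2
  linarith

lemma fderiv_zero_of_one_lt {h : ℝ × ℝ → ℝ} (sh : SuppInDisc h) {y : ℝ × ℝ}
    (hy : 1 < y.1 ^ 2 + y.2 ^ 2) : fderiv ℝ h y = 0 := by
  have hopen : IsOpen {z : ℝ × ℝ | 1 < z.1 ^ 2 + z.2 ^ 2} :=
    isOpen_lt continuous_const (by fun_prop)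
  have heq : h =ᶠ[nhds y] fun _ => (0 : ℝ) := by
    filter_upwards [hopen.mem_nhds hy] with z hz
    exact sh z (le_of_lt hz)
  rw [heq.fderiv_eq, fderiv_const_apply]

lemma hcs_fderiv {h : ℝ × ℝ → ℝ} (sh : SuppInDisc h) : HasCompactSupport (fderiv ℝ h) := by
  apply HasCompactSupport.intro (isCompact_closedBall (0 : ℝ × ℝ) 2)
  intro y hy
  apply fderiv_zero_of_one_lt sh
  have h2 : 2 < ‖y‖ := by
    simp only [Metric.mem_closedBall, dist_zero_right, not_le] at hy
    exact hy
  rw [Prod.norm_def] at h2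
  rcases lt_max_iff.mp h2 with h1 | h1 <;>
    simp only [Real.norm_eq_abs] at h1
  · nlinarith [sq_nonneg y.2, sq_abs y.1]
  · nlinarith [sq_nonneg y.1, sq_abs y.2]

lemma integrableOn_aux {E : Type*} [NormedAddCommGroup E] (g : ℝ × ℝ → E) (hg : Continuous g)
    (h0 : ∀ y : ℝ × ℝ, 2 ≤ y.2 → g y = 0) (x w : ℝ × ℝ) (hw2 : 0 < w.2) :
    IntegrableOn (fun t : ℝ => g (x + t • w)) (Ioi 0) volume := by
  have hT0 : 0 < (3 + |x.2|) / w.2 := Tpos x hw2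
  rw [show Ioi (0:ℝ) = Ioc 0 ((3 + |x.2|) / w.2) ∪ Ioi ((3 + |x.2|) / w.2) from
    (Ioc_union_Ioi_eq_Ioi hT0.le).symm]
  apply IntegrableOn.union
  · exact Continuous.integrableOn_Ioc (by fun_prop)
  · apply (integrableOn_zero (ε' := E)).congr_fun ?_ measurableSet_Ioi
    intro t ht
    exact (h0 _ (escape x w hw2 (le_of_lt ht))).symm

lemma Xbeam_eq (h : ℝ × ℝ → ℝ) (hg : Continuous h) (sh : SuppInDisc h)
    (x w : ℝ × ℝ) (hw2 : 0 < w.2) {T : ℝ} (hT : (3 + |x.2|) / w.2 ≤ T) :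
    Xbeam w h x = ∫ t in (0:ℝ)..T, h (x + t • w) := by
  have hT0 : 0 < T := lt_of_lt_of_le (Tpos x hw2) hT
  have h0 : ∀ y : ℝ × ℝ, 2 ≤ y.2 → h y = 0 := fun y hy => sh y (le_of_lt (one_lt_of_two_le hy))
  rw [intervalIntegral.integral_of_le hT0.le, Xbeam,
    show Ioi (0:ℝ) = Ioc 0 T ∪ Ioi T from (Ioc_union_Ioi_eq_Ioi hT0.le).symm,
    setIntegral_union (Ioc_disjoint_Ioi le_rfl) measurableSet_Ioi
      (Continuous.integrableOn_Ioc (by fun_prop : Continuous fun t : ℝ => h (x + t • w)))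
      (((integrableOn_zero (ε' := ℝ)).congr_fun
        (fun t ht => (h0 _ (escape x w hw2 (le_trans hT (le_of_lt ht)))).symm)
        measurableSet_Ioi))]
  rw [setIntegral_congr_fun measurableSet_Ioi
    (fun t ht => h0 _ (escape x w hw2 (le_trans hT (le_of_lt ht))))]
  simp


lemma integrableOn_fderiv {h : ℝ × ℝ → ℝ} (hc : ContDiff ℝ 1 h) (sh : SuppInDisc h)
    (x w : ℝ × ℝ) (hw2 : 0 < w.2) :
    IntegrableOn (fun t : ℝ => fderiv ℝ h (x + t • w)) (Ioi 0) volume :=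
  integrableOn_aux _ (hc.continuous_fderiv one_ne_zero)
    (fun y hy => fderiv_zero_of_one_lt sh (one_lt_of_two_le hy)) x w hw2

lemma hasFDerivAt_Xbeam {h : ℝ × ℝ → ℝ} (hc : ContDiff ℝ 1 h) (sh : SuppInDisc h)
    (w : ℝ × ℝ) (hw2 : 0 < w.2) (x : ℝ × ℝ) :
    HasFDerivAt (Xbeam w h) (∫ t in Ioi (0:ℝ), fderiv ℝ h (x + t • w)) x := by
  obtain ⟨C, hC⟩ := (hcs_fderiv sh).exists_bound_of_continuous (hc.continuous_fderiv one_ne_zero)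
  set T : ℝ := (4 + |x.2|) / w.2 with hTdef
  have hdiffh : Differentiable ℝ h := hc.differentiable one_ne_zero
  have hder : ∀ (t : ℝ) (x' : ℝ × ℝ),
      HasFDerivAt (fun y => h (y + t • w)) (fderiv ℝ h (x' + t • w)) x' := by
    intro t x'
    have h1 : HasFDerivAt (fun y : ℝ × ℝ => y + t • w)
        (ContinuousLinearMap.id ℝ (ℝ × ℝ)) x' := (hasFDerivAt_id x').add_const _
    exact ((hdiffh (x' + t • w)).hasFDerivAt).comp x' h1
  have hball : ∀ x' ∈ Metric.ball x 1, ∀ t : ℝ, T < t → fderiv ℝ h (x' + t • w) = 0 := by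
    intro x' hx' t ht
    have hd : |x'.2 - x.2| < 1 := by
      have h1 : ‖(x' - x).2‖ ≤ ‖x' - x‖ := norm_snd_le _
      have h2 : ‖x' - x‖ < 1 := by rwa [← dist_eq_norm]
      simp only [Prod.snd_sub, Real.norm_eq_abs] at h1
      linarith
    have habs : |x'.2| ≤ |x.2| + 1 := by
      have := abs_sub_abs_le_abs_sub x'.2 x.2
      linarith
    have hTle : (3 + |x'.2|) / w.2 ≤ t := by
      refine le_trans ?_ ht.le
      rw [hTdef, div_le_div_iff_of_pos_right hw2]
      linarith
    exact fderiv_zero_of_one_lt sh (one_lt_of_two_le (escape x' w hw2 hTle))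
  refine hasFDerivAt_integral_of_dominated_of_fderiv_le (𝕜 := ℝ)
    (F := fun x t => h (x + t • w)) (F' := fun x t => fderiv ℝ h (x + t • w))
    (μ := volume.restrict (Ioi 0)) (s := Metric.ball x 1)
    (bound := (Icc (0:ℝ) T).indicator fun _ => C) (Metric.ball_mem_nhds x one_pos) ?_ ?_ ?_ ?_ ?_ ?_
  · exact Filter.Eventually.of_forall fun x' =>
      (Continuous.aestronglyMeasurable (by fun_prop))
  · exact integrableOn_aux _ hc.continuous
      (fun y hy => sh y (le_of_lt (one_lt_of_two_le hy))) x w hw2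
  · exact Continuous.aestronglyMeasurable
      ((hc.continuous_fderiv one_ne_zero).comp (by fun_prop))
  · rw [ae_restrict_iff' measurableSet_Ioi]
    refine Filter.Eventually.of_forall fun t ht x' hx' => ?_
    show ‖fderiv ℝ h (x' + t • w)‖ ≤ (Icc (0:ℝ) T).indicator (fun _ => C) t
    rcases le_or_gt t T with h1 | h1
    · rw [Set.indicator_of_mem (Set.mem_Icc.mpr ⟨(mem_Ioi.mp ht).le, h1⟩)]
      exact hC _
    · rw [Set.indicator_of_notMem (fun hmem => absurd hmem.2 (not_le.mpr h1)),
        hball x' hx' t h1]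
      simp
  · apply Integrable.restrict
    exact (integrable_indicator_iff measurableSet_Icc).2
      (integrableOn_const measure_Icc_lt_top.ne)
  · exact Filter.Eventually.of_forall fun t x' _ => hder t x'


lemma hasDerivAt_line (x w : ℝ × ℝ) (t : ℝ) :
    HasDerivAt (fun s : ℝ => x + s • w) w t := by
  simpa using ((hasDerivAt_id t).smul_const w).const_add x

lemma hasDerivAt_comp_line {h : ℝ × ℝ → ℝ} (hd : Differentiable ℝ h) (x w : ℝ × ℝ) (t : ℝ) :
    HasDerivAt (fun s : ℝ => h (x + s • w)) (fderiv ℝ h (x + t • w) w) t :=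
  (hd _).hasFDerivAt.comp_hasDerivAt t (hasDerivAt_line x w t)

lemma integral_fderiv_apply {h : ℝ × ℝ → ℝ} (hc : ContDiff ℝ 1 h) (sh : SuppInDisc h)
    (w : ℝ × ℝ) (hw2 : 0 < w.2) (x : ℝ × ℝ) :
    (∫ t in Ioi (0:ℝ), fderiv ℝ h (x + t • w)) w = - h x := by
  rw [ContinuousLinearMap.integral_apply (integrableOn_fderiv hc sh x w hw2)]
  set T : ℝ := (3 + |x.2|) / w.2 with hTdef
  have hT0 : 0 < T := Tpos x hw2
  have hcont : Continuous fun t : ℝ => (fderiv ℝ h (x + t • w)) w := by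
    have h1 : Continuous fun t : ℝ => fderiv ℝ h (x + t • w) :=
      (hc.continuous_fderiv one_ne_zero).comp (by fun_prop)
    exact (ContinuousLinearMap.apply ℝ ℝ w).continuous.comp h1
  have hfar : ∀ t ∈ Ioi T, (fderiv ℝ h (x + t • w)) w = (fun _ : ℝ => (0:ℝ)) t := by
    intro t ht
    rw [fderiv_zero_of_one_lt sh (one_lt_of_two_le (escape x w hw2 (le_of_lt ht)))]
    simp
  rw [show Ioi (0:ℝ) = Ioc 0 T ∪ Ioi T from (Ioc_union_Ioi_eq_Ioi hT0.le).symm,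
    setIntegral_union (Ioc_disjoint_Ioi le_rfl) measurableSet_Ioi
      hcont.integrableOn_Ioc
      (((integrableOn_zero (ε' := ℝ)).congr_fun (fun t ht => (hfar t ht).symm)
        measurableSet_Ioi)),
    setIntegral_congr_fun measurableSet_Ioi hfar, integral_zero, add_zero,
    ← intervalIntegral.integral_of_le hT0.le,
    intervalIntegral.integral_eq_sub_of_hasDerivAt
      (fun t _ => hasDerivAt_comp_line (hc.differentiable one_ne_zero) x w t)
      (hcont.intervalIntegrable 0 T)]
  have h1 : h (x + T • w) = 0 := sh _ (le_of_lt (one_lt_of_two_le (escape x w hw2 le_rfl)))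
  simp [h1]

lemma clm_ext_basis {L M : (ℝ × ℝ) →L[ℝ] ℝ}
    (h1 : L (1, 0) = M (1, 0)) (h2 : L (0, 1) = M (0, 1)) : L = M := by
  apply ContinuousLinearMap.ext
  intro z
  have hz : z = z.1 • ((1:ℝ), (0:ℝ)) + z.2 • ((0:ℝ), (1:ℝ)) := by
    simp [Prod.ext_iff]
  rw [hz, map_add, map_add, ContinuousLinearMap.map_smul, ContinuousLinearMap.map_smul, ContinuousLinearMap.map_smul, ContinuousLinearMap.map_smul, h1, h2]

end TVL

/-- kernel description of the transverse V-line transform. -/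
theorem kernel_transverse
    (u1 u2 : ℝ) (hu : u1 ^ 2 + u2 ^ 2 = 1) (hu1 : 0 < u1) (hu2 : 0 < u2)
    (f11 f12 f22 : ℝ × ℝ → ℝ)
    (h11 : ContDiff ℝ 2 f11) (h12 : ContDiff ℝ 2 f12) (h22 : ContDiff ℝ 2 f22)
    (s11 : SuppInDisc f11) (s12 : SuppInDisc f12) (s22 : SuppInDisc f22) :
    (∀ x : ℝ × ℝ, VlineT u1 u2 f11 f12 f22 x = 0) ↔
      ∃ φ : ℝ × ℝ → ℝ, ContDiff ℝ 1 φ ∧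
        ∀ x : ℝ × ℝ,
          fderiv ℝ φ x ((1 : ℝ), (0 : ℝ)) = u2 ^ 2 * f11 x + u1 ^ 2 * f22 x ∧
          fderiv ℝ φ x ((0 : ℝ), (1 : ℝ)) = -(2 * u1 ^ 2) * f12 x := by
  have hu1ne : u1 ≠ 0 := ne_of_gt hu1
  have hu2ne : u2 ≠ 0 := ne_of_gt hu2
  set gm : ℝ × ℝ → ℝ := fun y => u2 ^ 2 * f11 y - 2 * u1 * u2 * f12 y + u1 ^ 2 * f22 y
    with hgm_def
  set gp : ℝ × ℝ → ℝ := fun y => u2 ^ 2 * f11 y + 2 * u1 * u2 * f12 y + u1 ^ 2 * f22 y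
    with hgp_def
  have hu2' : (0:ℝ) < ((u1, u2) : ℝ × ℝ).2 := hu2
  have hv2' : (0:ℝ) < ((-u1, u2) : ℝ × ℝ).2 := hu2
  have hC1 : ContDiff ℝ 1 f11 := h11.of_le (by norm_num)
  have hC2 : ContDiff ℝ 1 f12 := h12.of_le (by norm_num)
  have hC3 : ContDiff ℝ 1 f22 := h22.of_le (by norm_num)
  have hgmc : ContDiff ℝ 1 gm := by
    rw [hgm_def]
    exact ((contDiff_const.mul hC1).sub (contDiff_const.mul hC2)).add
      (contDiff_const.mul hC3)
  have hgpc : ContDiff ℝ 1 gp := by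
    rw [hgp_def]
    exact ((contDiff_const.mul hC1).add (contDiff_const.mul hC2)).add
      (contDiff_const.mul hC3)
  have sgm : SuppInDisc gm := by
    intro y hy
    rw [hgm_def]
    simp only
    rw [s11 y hy, s12 y hy, s22 y hy]
    ring
  have sgp : SuppInDisc gp := by
    intro y hy
    rw [hgp_def]
    simp only
    rw [s11 y hy, s12 y hy, s22 y hy]
    ring
  have hVeq : ∀ x : ℝ × ℝ,
      VlineT u1 u2 f11 f12 f22 x = Xbeam (u1, u2) gm x + Xbeam (-u1, u2) gp x :=
    fun _ => rfl
  constructor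
  · -- forward direction
    intro hTzero
    set Fd : ℝ × ℝ → (ℝ × ℝ) →L[ℝ] ℝ :=
      fun x => ∫ t in Set.Ioi (0:ℝ), fderiv ℝ gm (x + t • ((u1, u2) : ℝ × ℝ)) with hFd_def
    set Gd : ℝ × ℝ → (ℝ × ℝ) →L[ℝ] ℝ :=
      fun x => ∫ t in Set.Ioi (0:ℝ), fderiv ℝ gp (x + t • ((-u1, u2) : ℝ × ℝ)) with hGd_def
    have hF : ∀ x, HasFDerivAt (Xbeam (u1, u2) gm) (Fd x) x :=
      fun x => TVL.hasFDerivAt_Xbeam hgmc sgm _ hu2' x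
    have hG : ∀ x, HasFDerivAt (Xbeam (-u1, u2) gp) (Gd x) x :=
      fun x => TVL.hasFDerivAt_Xbeam hgpc sgp _ hv2' x
    have hsum : ∀ x, Xbeam (u1, u2) gm x + Xbeam (-u1, u2) gp x = 0 := by
      intro x
      rw [← hVeq x]
      exact hTzero x
    have hGF : Xbeam (-u1, u2) gp = fun x => - Xbeam (u1, u2) gm x :=
      funext fun x => by linarith [hsum x]
    have hGd_eq : ∀ x, Gd x = - Fd x := by
      intro x
      refine (hG x).unique ?_
      rw [hGF]
      exact (hF x).neg
    have hFu : ∀ x, Fd x ((u1, u2) : ℝ × ℝ) = - gm x :=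
      fun x => TVL.integral_fderiv_apply hgmc sgm _ hu2' x
    have hGv : ∀ x, Gd x ((-u1, u2) : ℝ × ℝ) = - gp x :=
      fun x => TVL.integral_fderiv_apply hgpc sgp _ hv2' x
    have hFv : ∀ x, Fd x ((-u1, u2) : ℝ × ℝ) = gp x := by
      intro x
      have h := hGv x
      rw [hGd_eq x, ContinuousLinearMap.neg_apply] at h
      linarith
    have hφder : ∀ x, HasFDerivAt (fun y => -u1 * Xbeam (u1, u2) gm y) ((-u1) • Fd x) x :=
      fun x => (hF x).const_mul (-u1)
    have hgmx : ∀ x : ℝ × ℝ, gm x = u2 ^ 2 * f11 x - 2 * u1 * u2 * f12 x + u1 ^ 2 * f22 x :=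
      fun x => rfl
    have hgpx : ∀ x : ℝ × ℝ, gp x = u2 ^ 2 * f11 x + 2 * u1 * u2 * f12 x + u1 ^ 2 * f22 x :=
      fun x => rfl
    have hval1 : ∀ x, ((-u1) • Fd x) ((1:ℝ), (0:ℝ)) = u2 ^ 2 * f11 x + u1 ^ 2 * f22 x := by
      intro x
      have hdiff : ((u1, u2) : ℝ × ℝ) - ((-u1, u2) : ℝ × ℝ) = ((2 * u1 : ℝ), (0 : ℝ)) := by
        simp [Prod.ext_iff]
        ring
      have hb : ((1:ℝ), (0:ℝ)) = (2 * u1)⁻¹ • (((u1, u2) : ℝ × ℝ) - ((-u1, u2) : ℝ × ℝ)) := by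
        rw [hdiff, Prod.smul_mk, smul_eq_mul, smul_eq_mul, mul_zero,
          inv_mul_cancel₀ (by positivity : (2 * u1 : ℝ) ≠ 0)]
      rw [ContinuousLinearMap.smul_apply, hb, ContinuousLinearMap.map_smul, map_sub,
        hFu x, hFv x, smul_eq_mul, smul_eq_mul, hgmx x, hgpx x]
      field_simp
      ring
    have hval2 : ∀ x, ((-u1) • Fd x) ((0:ℝ), (1:ℝ)) = -(2 * u1 ^ 2) * f12 x := by
      intro x
      have hadd : ((u1, u2) : ℝ × ℝ) + ((-u1, u2) : ℝ × ℝ) = ((0 : ℝ), (2 * u2 : ℝ)) := by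
        simp [Prod.ext_iff]
        ring
      have hb : ((0:ℝ), (1:ℝ)) = (2 * u2)⁻¹ • (((u1, u2) : ℝ × ℝ) + ((-u1, u2) : ℝ × ℝ)) := by
        rw [hadd, Prod.smul_mk, smul_eq_mul, smul_eq_mul, mul_zero,
          inv_mul_cancel₀ (by positivity : (2 * u2 : ℝ) ≠ 0)]
      rw [ContinuousLinearMap.smul_apply, hb, ContinuousLinearMap.map_smul, map_add,
        hFu x, hFv x, smul_eq_mul, smul_eq_mul, hgmx x, hgpx x]
      field_simp
      ring
    refine ⟨fun y => -u1 * Xbeam (u1, u2) gm y, ?_, fun x => ⟨?_, ?_⟩⟩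
    · rw [contDiff_one_iff_fderiv]
      refine ⟨fun x => (hφder x).differentiableAt, ?_⟩
      have hfd : (fderiv ℝ fun y => -u1 * Xbeam (u1, u2) gm y) = fun x =>
          (u2 ^ 2 * f11 x + u1 ^ 2 * f22 x) • ContinuousLinearMap.fst ℝ ℝ ℝ
            + (-(2 * u1 ^ 2) * f12 x) • ContinuousLinearMap.snd ℝ ℝ ℝ := by
        funext x
        rw [(hφder x).fderiv]
        refine TVL.clm_ext_basis ?_ ?_
        · rw [hval1 x]
          simp
        · rw [hval2 x]
          simp
      rw [hfd]
      exact (((continuous_const.mul h11.continuous).add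
          (continuous_const.mul h22.continuous)).smul continuous_const).add
        ((continuous_const.mul h12.continuous).smul continuous_const)
    · rw [(hφder x).fderiv]
      exact hval1 x
    · rw [(hφder x).fderiv]
      exact hval2 x
  · -- backward direction
    rintro ⟨φ, hφc, hφd⟩ x
    have hφdiff : Differentiable ℝ φ := hφc.differentiable one_ne_zero
    set T : ℝ := (3 + |x.2|) / u2 with hT_def
    have hT0 : 0 < T := TVL.Tpos x hu2
    have hfder_u : ∀ p : ℝ × ℝ, fderiv ℝ φ p ((u1, u2) : ℝ × ℝ) = u1 * gm p := by
      intro p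
      have hb : ((u1, u2) : ℝ × ℝ) = u1 • ((1:ℝ), (0:ℝ)) + u2 • ((0:ℝ), (1:ℝ)) := by
        simp [Prod.ext_iff]
      rw [hb, map_add, ContinuousLinearMap.map_smul, ContinuousLinearMap.map_smul,
        (hφd p).1, (hφd p).2, smul_eq_mul, smul_eq_mul]
      show _ = u1 * gm p
      rw [hgm_def]
      simp only
      ring
    have hfder_v : ∀ p : ℝ × ℝ, fderiv ℝ φ p ((-u1, u2) : ℝ × ℝ) = -u1 * gp p := by
      intro p
      have hb : ((-u1, u2) : ℝ × ℝ) = (-u1) • ((1:ℝ), (0:ℝ)) + u2 • ((0:ℝ), (1:ℝ)) := by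
        simp [Prod.ext_iff]
      rw [hb, map_add, ContinuousLinearMap.map_smul, ContinuousLinearMap.map_smul,
        (hφd p).1, (hφd p).2, smul_eq_mul, smul_eq_mul]
      show _ = -u1 * gp p
      rw [hgp_def]
      simp only
      ring
    have hder_u : ∀ t : ℝ, HasDerivAt (fun s : ℝ => φ (x + s • ((u1, u2) : ℝ × ℝ)))
        (u1 * gm (x + t • ((u1, u2) : ℝ × ℝ))) t := by
      intro t
      have h0 := TVL.hasDerivAt_comp_line hφdiff x ((u1, u2) : ℝ × ℝ) t
      rwa [hfder_u] at h0
    have hder_v : ∀ t : ℝ, HasDerivAt (fun s : ℝ => φ (x + s • ((-u1, u2) : ℝ × ℝ)))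
        (-u1 * gp (x + t • ((-u1, u2) : ℝ × ℝ))) t := by
      intro t
      have h0 := TVL.hasDerivAt_comp_line hφdiff x ((-u1, u2) : ℝ × ℝ) t
      rwa [hfder_v] at h0
    have hXu : Xbeam (u1, u2) gm x = ∫ t in (0:ℝ)..T, gm (x + t • ((u1, u2) : ℝ × ℝ)) :=
      TVL.Xbeam_eq gm hgmc.continuous sgm x _ hu2' le_rfl
    have hXv : Xbeam (-u1, u2) gp x = ∫ t in (0:ℝ)..T, gp (x + t • ((-u1, u2) : ℝ × ℝ)) :=
      TVL.Xbeam_eq gp hgpc.continuous sgp x _ hv2' le_rfl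
    have h1 : u1 * Xbeam (u1, u2) gm x = φ (x + T • ((u1, u2) : ℝ × ℝ)) - φ x := by
      rw [hXu, ← intervalIntegral.integral_const_mul,
        intervalIntegral.integral_eq_sub_of_hasDerivAt (fun t _ => hder_u t)
          (Continuous.intervalIntegrable
            (continuous_const.mul (hgmc.continuous.comp (by fun_prop))) 0 T)]
      simp
    have h2 : -u1 * Xbeam (-u1, u2) gp x = φ (x + T • ((-u1, u2) : ℝ × ℝ)) - φ x := by
      rw [hXv, ← intervalIntegral.integral_const_mul,
        intervalIntegral.integral_eq_sub_of_hasDerivAt (fun t _ => hder_v t)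
          (Continuous.intervalIntegrable
            (continuous_const.mul (hgpc.continuous.comp (by fun_prop))) 0 T)]
      simp
    have hfar : φ (x + T • ((u1, u2) : ℝ × ℝ)) = φ (x + T • ((-u1, u2) : ℝ × ℝ)) := by
      have hseg : ∀ s : ℝ, HasDerivAt
          (fun s : ℝ => φ (x + T • ((-u1, u2) : ℝ × ℝ) + s • ((1:ℝ), (0:ℝ)))) 0 s := by
        intro s
        have h0 := TVL.hasDerivAt_comp_line hφdiff
          (x + T • ((-u1, u2) : ℝ × ℝ)) ((1:ℝ), (0:ℝ)) s
        have h2c : (2:ℝ) ≤ (x + T • ((-u1, u2) : ℝ × ℝ) + s • ((1:ℝ), (0:ℝ))).2 := by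
          have he : (2:ℝ) ≤ (x + T • ((-u1, u2) : ℝ × ℝ)).2 :=
            TVL.escape x ((-u1, u2) : ℝ × ℝ) hv2' le_rfl
          have hsnd : (x + T • ((-u1, u2) : ℝ × ℝ) + s • ((1:ℝ), (0:ℝ))).2
              = (x + T • ((-u1, u2) : ℝ × ℝ)).2 + s * 0 := rfl
          rw [hsnd]
          linarith
        have hz : fderiv ℝ φ (x + T • ((-u1, u2) : ℝ × ℝ) + s • ((1:ℝ), (0:ℝ)))
            ((1:ℝ), (0:ℝ)) = 0 := by
          rw [(hφd _).1, s11 _ (le_of_lt (TVL.one_lt_of_two_le h2c)),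
            s22 _ (le_of_lt (TVL.one_lt_of_two_le h2c))]
          ring
        rwa [hz] at h0
      have hkey := intervalIntegral.integral_eq_sub_of_hasDerivAt
        (a := 0) (b := 2 * T * u1) (f' := fun _ : ℝ => (0:ℝ)) (fun s _ => hseg s)
        intervalIntegrable_const
      have hpt : x + T • ((-u1, u2) : ℝ × ℝ) + (2 * T * u1) • ((1:ℝ), (0:ℝ))
          = x + T • ((u1, u2) : ℝ × ℝ) := by
        simp [Prod.ext_iff]
        ring
      simp only [intervalIntegral.integral_zero, zero_smul, add_zero] at hkey
      rw [hpt] at hkey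
      linarith
    rw [hVeq x]
    have hmain : u1 * (Xbeam (u1, u2) gm x + Xbeam (-u1, u2) gp x) = 0 := by
      rw [mul_add]
      linarith
    rcases mul_eq_zero.mp hmain with h | h
    · exact absurd h hu1ne
    · exact h
end
end

section
/- Let f = (f11, f12, f22) ∈ C²_c(S²; D1). Then Mf(x) = 0 for all x ∈ ℝ² if and only if there exists a continuously differentiable function φ : ℝ² → ℝ with gradient ∇φ = ((u1² − u2²) f12, −u1² (f11 − f22)) on ℝ². (Kernel description of the mixed V-line transform.) -/
noncomputable section

open MeasureTheory

section Helpers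
open Topology Filter Metric

lemma Xbeam_trunc (w : ℝ × ℝ) (h : ℝ × ℝ → ℝ) (hc : Continuous h) (x : ℝ × ℝ) (C : ℝ)
    (hC : 0 ≤ C) (hz : ∀ t, C ≤ t → h (x + t • w) = 0) :
    Xbeam w h x = ∫ t in (0:ℝ)..C, h (x + t • w) := by
  have hmeas : Continuous fun t : ℝ => h (x + t • w) := by fun_prop
  have hsplit : Set.Ioi (0:ℝ) = Set.Ioc 0 C ∪ Set.Ioi C := (Set.Ioc_union_Ioi_eq_Ioi hC).symm
  have h1 : IntegrableOn (fun t : ℝ => h (x + t • w)) (Set.Ioc 0 C) := by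
    exact (hmeas.integrableOn_Icc (a := 0) (b := C)).mono_set Set.Ioc_subset_Icc_self
  have h2 : IntegrableOn (fun t : ℝ => h (x + t • w)) (Set.Ioi C) := by
    apply (integrableOn_zero (ε' := ℝ)).congr_fun _ measurableSet_Ioi
    intro t ht; exact (hz t (le_of_lt ht)).symm
  rw [Xbeam, hsplit, setIntegral_union (Set.Ioc_disjoint_Ioi le_rfl) measurableSet_Ioi h1 h2]
  have h3 : ∫ t in Set.Ioi C, h (x + t • w) = 0 := by
    apply setIntegral_eq_zero_of_forall_eq_zero
    intro t ht; exact hz t (le_of_lt ht)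
  rw [h3, add_zero, intervalIntegral.integral_of_le hC]

lemma vanish_ray {h : ℝ × ℝ → ℝ} (hs : SuppInDisc h) {w : ℝ × ℝ} (hw2 : 0 < w.2)
    (x : ℝ × ℝ) {t : ℝ} (ht : (1 - x.2) / w.2 ≤ t) : h (x + t • w) = 0 := by
  apply hs
  have h2 : (x + t • w).2 = x.2 + t * w.2 := rfl
  have : 1 ≤ x.2 + t * w.2 := by
    have := (div_le_iff₀ hw2).mp ht; linarith
  rw [h2]; nlinarith [sq_nonneg (x + t • w).1, sq_nonneg (x.2 + t * w.2)]

/-- On a ray, `Xbeam` equals `∫ t in s..C` for suitable `C`. -/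
lemma Xbeam_ray_eq {h : ℝ × ℝ → ℝ} (hc : Continuous h) (hs : SuppInDisc h)
    {w : ℝ × ℝ} (hw2 : 0 < w.2) (x : ℝ × ℝ) {C s : ℝ}
    (hCs : s ≤ C) (hCT : (1 - x.2) / w.2 ≤ C) :
    Xbeam w h (x + s • w) = ∫ t in s..C, h (x + t • w) := by
  have key : ∀ t : ℝ, x + s • w + t • w = x + (t + s) • w := by
    intro t; rw [add_smul]; abel
  rw [Xbeam_trunc w h hc (x + s • w) (C - s) (by linarith) ?_]
  · rw [intervalIntegral.integral_congr (g := fun t => h (x + (t+s) • w)) (fun t _ => by rw [key t])]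
    have := intervalIntegral.integral_comp_add_right (a := (0:ℝ)) (b := C - s)
      (fun t => h (x + t • w)) s
    simpa using this
  · intro t ht
    rw [key t]
    apply vanish_ray hs hw2 x
    linarith

/-- Derivative of `Xbeam` along its own ray direction. -/
lemma Xbeam_ray_hasDerivAt {h : ℝ × ℝ → ℝ} (hc : Continuous h) (hs : SuppInDisc h)
    {w : ℝ × ℝ} (hw2 : 0 < w.2) (x : ℝ × ℝ) (s₀ : ℝ) :
    HasDerivAt (fun s => Xbeam w h (x + s • w)) (-h (x + s₀ • w)) s₀ := by
  set C : ℝ := max (s₀ + 1) ((1 - x.2) / w.2) with hCdef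
  have hcont : Continuous fun t : ℝ => h (x + t • w) := by fun_prop
  have hftc : HasDerivAt (fun s => ∫ t in C..s, h (x + t • w)) (h (x + s₀ • w)) s₀ := by
    apply intervalIntegral.integral_hasDerivAt_right
      (hcont.intervalIntegrable C s₀) (hcont.stronglyMeasurableAtFilter volume (𝓝 s₀))
      hcont.continuousAt
  have hftc' : HasDerivAt (fun s => ∫ t in s..C, h (x + t • w)) (-h (x + s₀ • w)) s₀ := by
    have := hftc.neg
    apply this.congr_of_eventuallyEq
    filter_upwards with s
    rw [intervalIntegral.integral_symm]
    rfl
  apply hftc'.congr_of_eventuallyEq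
  have hev : ∀ᶠ s in 𝓝 s₀, s < s₀ + 1 := eventually_lt_nhds (by linarith)
  filter_upwards [hev] with s hsl
  rw [Xbeam_ray_eq hc hs hw2 x (le_trans hsl.le (le_max_left _ _)) (le_max_right _ _)]

lemma suppInDisc_hasCompactSupport {h : ℝ × ℝ → ℝ} (hs : SuppInDisc h) :
    HasCompactSupport h := by
  apply HasCompactSupport.intro (isCompact_closedBall (0 : ℝ × ℝ) 1)
  intro x hx
  apply hs
  simp only [Metric.mem_closedBall, dist_zero_right, Prod.norm_def, not_le, sup_lt_iff, not_and,
    not_lt] at hx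
  simp only [Real.norm_eq_abs] at hx
  rcases lt_sup_iff.mp hx with h1 | h1 <;>
    nlinarith [sq_nonneg x.1, sq_nonneg x.2, abs_nonneg x.1, sq_abs x.1, sq_abs x.2, abs_nonneg x.2]

lemma exists_dirderiv_bound {g : ℝ × ℝ → ℝ} (hg : ContDiff ℝ 1 g) (hcs : HasCompactSupport g)
    (w : ℝ × ℝ) : ∃ Cb : ℝ, ∀ y : ℝ × ℝ, ‖fderiv ℝ g y w‖ ≤ Cb := by
  have hf : Continuous fun y => fderiv ℝ g y w :=
    (hg.continuous_fderiv one_ne_zero).clm_apply continuous_const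
  exact (hcs.fderiv_apply (𝕜 := ℝ) w).exists_bound_of_continuous hf

/-- FTC along a ray for the beam transform of a directional derivative of a `C¹` function. -/
lemma Xbeam_grad {φ : ℝ × ℝ → ℝ} (hφ : ContDiff ℝ 1 φ) {w : ℝ × ℝ} (hw2 : 0 < w.2)
    (hvan : SuppInDisc (fun y => fderiv ℝ φ y w)) (x : ℝ × ℝ) {C : ℝ} (hC0 : 0 ≤ C)
    (hCT : (1 - x.2) / w.2 ≤ C) :
    Xbeam w (fun y => fderiv ℝ φ y w) x = φ (x + C • w) - φ x := by
  have hcont : Continuous fun y => fderiv ℝ φ y w :=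
    (hφ.continuous_fderiv one_ne_zero).clm_apply continuous_const
  rw [Xbeam_trunc w _ hcont x C hC0 (fun t ht => vanish_ray hvan hw2 x (le_trans hCT ht))]
  have haff' : ∀ s : ℝ, HasDerivAt (fun s : ℝ => x + s • w) w s := by
    intro s
    simpa using (((hasDerivAt_id s).smul_const w).const_add x)
  have hder : ∀ t ∈ Set.uIcc (0:ℝ) C,
      HasDerivAt (fun t => φ (x + t • w)) (fderiv ℝ φ (x + t • w) w) t := fun t _ =>
    ((hφ.differentiable one_ne_zero) _).hasFDerivAt.comp_hasDerivAt t (haff' t)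
  have hint : IntervalIntegrable (fun t : ℝ => fderiv ℝ φ (x + t • w) w) volume 0 C :=
    (hcont.comp (continuous_const.add (continuous_id.smul continuous_const))).intervalIntegrable 0 C
  rw [intervalIntegral.integral_eq_sub_of_hasDerivAt hder hint]
  simp

end Helpers

section Curl
open Topology Filter Metric

lemma curl_from_zero {u v : ℝ × ℝ} (hu2 : 0 < u.2) (hv2 : 0 < v.2)
    {gu gv : ℝ × ℝ → ℝ} (hgu : ContDiff ℝ 1 gu) (hgv : ContDiff ℝ 1 gv)
    (hsu : SuppInDisc gu) (hsv : SuppInDisc gv)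
    (hzero : ∀ x, Xbeam u gu x + Xbeam v gv x = 0)
    (x : ℝ × ℝ) (hx : ∃ a b : ℝ, a • u + b • v = x) :
    fderiv ℝ gu x v + fderiv ℝ gv x u = 0 := by
  have hguc : Continuous gu := hgu.continuous
  have hgvc : Continuous gv := hgv.continuous
  obtain ⟨Cb, hCb⟩ := exists_dirderiv_bound hgu (suppInDisc_hasCompactSupport hsu) v
  have haff : ∀ (y : ℝ × ℝ) (w : ℝ × ℝ), Continuous fun s : ℝ => y + s • w := fun y w =>
    continuous_const.add (continuous_id.smul continuous_const)
  have haff' : ∀ (y : ℝ × ℝ) (w : ℝ × ℝ) (s : ℝ), HasDerivAt (fun s : ℝ => y + s • w) w s := by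
    intro y w s
    simpa using (((hasDerivAt_id s).smul_const w).const_add y)
  have hDgu_cont : ∀ (y : ℝ × ℝ), Continuous fun s : ℝ => fderiv ℝ gu (y + s • u) v := fun y =>
    ((hgu.continuous_fderiv one_ne_zero).comp (haff y u)).clm_apply continuous_const
  have hdgv : ∀ (y w : ℝ × ℝ) (s : ℝ),
      HasDerivAt (fun s : ℝ => gv (y + s • w)) (fderiv ℝ gv (y + s • w) w) s := fun y w s =>
    ((hgv.differentiable one_ne_zero) _).hasFDerivAt.comp_hasDerivAt s (haff' y w s)
  have claimC : ∀ (a b₀ : ℝ),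
      HasDerivAt (fun b : ℝ => Xbeam u gu (b • v + a • u)) (gv (a • u + b₀ • v)) b₀ := by
    intro a b₀
    have h1 := (Xbeam_ray_hasDerivAt hgvc hsv hv2 (a • u) b₀).neg
    rw [neg_neg] at h1
    apply h1.congr_of_eventuallyEq
    filter_upwards with b
    have := hzero (a • u + b • v)
    rw [add_comm (b • v)]
    simp only [Pi.neg_apply]
    linarith
  have claimA : ∀ (a b : ℝ), Xbeam u gu (b • v + a • u) =
      Xbeam u gu (b • v) - ∫ s in (0:ℝ)..a, gu (b • v + s • u) := by
    intro a b
    have hder : ∀ s ∈ Set.uIcc (0:ℝ) a,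
        HasDerivAt (fun s => Xbeam u gu (b • v + s • u)) (-gu (b • v + s • u)) s :=
      fun s _ => Xbeam_ray_hasDerivAt hguc hsu hu2 (b • v) s
    have hint : IntervalIntegrable (fun s : ℝ => -gu (b • v + s • u)) volume 0 a :=
      ((hguc.comp (haff (b • v) u)).neg).intervalIntegrable 0 a
    have := intervalIntegral.integral_eq_sub_of_hasDerivAt hder hint
    rw [intervalIntegral.integral_neg] at this
    simp only [zero_smul, add_zero] at this
    linarith [this]
  have claimB : ∀ (a b₀ : ℝ), HasDerivAt (fun b : ℝ => ∫ s in (0:ℝ)..a, gu (b • v + s • u))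
      (∫ s in (0:ℝ)..a, fderiv ℝ gu (b₀ • v + s • u) v) b₀ := by
    intro a b₀
    have key := intervalIntegral.hasDerivAt_integral_of_dominated_loc_of_deriv_le
      (F := fun b s => gu (b • v + s • u)) (F' := fun b s => fderiv ℝ gu (b • v + s • u) v)
      (x₀ := b₀) (a := 0) (b := a) (μ := volume) (bound := fun _ => Cb) (Metric.ball_mem_nhds _ one_pos)
      (Eventually.of_forall fun b => (hguc.comp ((haff (b • v) u))).aestronglyMeasurable)
      ((hguc.comp (haff (b₀ • v) u)).intervalIntegrable 0 a)
      (((((hgu.continuous_fderiv one_ne_zero).comp (haff (b₀ • v) u))).clm_apply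
        continuous_const).aestronglyMeasurable)
      (ae_of_all _ fun s _ b _ => hCb _)
      intervalIntegrable_const
      (ae_of_all _ fun s _ b _ => by
        have h1 : HasDerivAt (fun b : ℝ => b • v + s • u) v b := by
          simpa using ((hasDerivAt_id b).smul_const v).add_const (s • u)
        exact ((hgu.differentiable one_ne_zero) _).hasFDerivAt.comp_hasDerivAt b h1)
    exact key.2
  have claimD : ∀ (a b₀ : ℝ), (∫ s in (0:ℝ)..a, fderiv ℝ gu (b₀ • v + s • u) v)
      = gv ((0:ℝ) • u + b₀ • v) - gv (a • u + b₀ • v) := by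
    intro a b₀
    have h1 := claimC a b₀
    have h2 := (claimC 0 b₀).sub (claimB a b₀)
    have h3 : HasDerivAt (fun b : ℝ => Xbeam u gu (b • v + a • u))
        (gv ((0:ℝ) • u + b₀ • v) - ∫ s in (0:ℝ)..a, fderiv ℝ gu (b₀ • v + s • u) v) b₀ := by
      apply h2.congr_of_eventuallyEq
      filter_upwards with b
      rw [claimA a b]
      simp
    have := h1.unique h3
    linarith
  have claimE : ∀ (a₀ b : ℝ),
      fderiv ℝ gu (b • v + a₀ • u) v = -(fderiv ℝ gv (b • v + a₀ • u) u) := by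
    intro a₀ b
    have hL : HasDerivAt (fun a : ℝ => ∫ s in (0:ℝ)..a, fderiv ℝ gu (b • v + s • u) v)
        (fderiv ℝ gu (b • v + a₀ • u) v) a₀ :=
      intervalIntegral.integral_hasDerivAt_right ((hDgu_cont (b • v)).intervalIntegrable 0 a₀)
        ((hDgu_cont (b • v)).stronglyMeasurableAtFilter volume (𝓝 a₀))
        (hDgu_cont (b • v)).continuousAt
    have hR : HasDerivAt (fun a : ℝ => gv ((0:ℝ) • u + b • v) - gv (a • u + b • v))
        (-(fderiv ℝ gv (b • v + a₀ • u) u)) a₀ := by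
      have := (hdgv (b • v) u a₀).const_sub (gv ((0:ℝ) • u + b • v))
      apply this.congr_of_eventuallyEq
      filter_upwards with a
      rw [add_comm (a • u)]
    have hR' := hR.congr_of_eventuallyEq (Eventually.of_forall fun a => claimD a b)
    exact hL.unique hR'
  obtain ⟨a, b, rfl⟩ := hx
  have := claimE a b
  rw [add_comm (b • v)] at this
  linarith

end Curl
section Potential
open Topology Filter Metric

lemma exists_potential {F1 F2 : ℝ × ℝ → ℝ} (h1 : ContDiff ℝ 1 F1) (h2 : ContDiff ℝ 1 F2)
    (hbd : ∃ C : ℝ, ∀ y : ℝ × ℝ, ‖fderiv ℝ F2 y ((1:ℝ),(0:ℝ))‖ ≤ C)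
    (hcurl : ∀ y : ℝ × ℝ, fderiv ℝ F1 y ((0:ℝ),(1:ℝ)) = fderiv ℝ F2 y ((1:ℝ),(0:ℝ))) :
    ∃ φ : ℝ × ℝ → ℝ, ContDiff ℝ 1 φ ∧
      ∀ x : ℝ × ℝ, fderiv ℝ φ x ((1:ℝ),(0:ℝ)) = F1 x ∧ fderiv ℝ φ x ((0:ℝ),(1:ℝ)) = F2 x := by
  obtain ⟨C, hC⟩ := hbd
  have h1c : Continuous F1 := h1.continuous
  have h2c : Continuous F2 := h2.continuous
  -- derivatives along coordinate lines
  have hline1 : ∀ (t : ℝ) (a : ℝ), HasDerivAt (fun a : ℝ => ((a, t) : ℝ × ℝ)) ((1:ℝ),(0:ℝ)) a := by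
    intro t a
    have := ((hasDerivAt_id a).smul_const (((1:ℝ),(0:ℝ)) : ℝ × ℝ)).const_add (((0:ℝ), t) : ℝ × ℝ)
    simp only [one_smul] at this
    apply this.congr_of_eventuallyEq
    filter_upwards with b
    ext <;> simp
  have hline2 : ∀ (a : ℝ) (t : ℝ), HasDerivAt (fun t : ℝ => ((a, t) : ℝ × ℝ)) ((0:ℝ),(1:ℝ)) t := by
    intro a t
    have := ((hasDerivAt_id t).smul_const (((0:ℝ),(1:ℝ)) : ℝ × ℝ)).const_add (((a : ℝ), (0:ℝ)) : ℝ × ℝ)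
    simp only [one_smul] at this
    apply this.congr_of_eventuallyEq
    filter_upwards with b
    ext <;> simp
  have hd1 : ∀ (s t : ℝ), HasDerivAt (fun a : ℝ => F1 (a, t)) (fderiv ℝ F1 (s, t) ((1:ℝ),(0:ℝ))) s :=
    fun s t => ((h1.differentiable one_ne_zero) _).hasFDerivAt.comp_hasDerivAt s (hline1 t s)
  have hd1' : ∀ (a t : ℝ), HasDerivAt (fun t : ℝ => F1 (a, t)) (fderiv ℝ F1 (a, t) ((0:ℝ),(1:ℝ))) t :=
    fun a t => ((h1.differentiable one_ne_zero) _).hasFDerivAt.comp_hasDerivAt t (hline2 a t)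
  have hd2 : ∀ (s t : ℝ), HasDerivAt (fun a : ℝ => F2 (a, t)) (fderiv ℝ F2 (s, t) ((1:ℝ),(0:ℝ))) s :=
    fun s t => ((h2.differentiable one_ne_zero) _).hasFDerivAt.comp_hasDerivAt s (hline1 t s)
  -- the W lemma : a ↦ ∫ t in 0..c, F2 (a,t) has derivative F1(a,c) - F1(a,0)
  have hW : ∀ (c : ℝ) (a₀ : ℝ), HasDerivAt (fun a : ℝ => ∫ t in (0:ℝ)..c, F2 (a, t))
      (F1 (a₀, c) - F1 (a₀, 0)) a₀ := by
    intro c a₀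
    have key := intervalIntegral.hasDerivAt_integral_of_dominated_loc_of_deriv_le
      (F := fun a t => F2 (a, t)) (F' := fun a t => fderiv ℝ F2 (a, t) ((1:ℝ),(0:ℝ)))
      (x₀ := a₀) (a := 0) (b := c) (μ := volume) (bound := fun _ => C) (Metric.ball_mem_nhds _ one_pos)
      (Eventually.of_forall fun a =>
        (h2c.comp (continuous_const.prodMk continuous_id)).aestronglyMeasurable)
      ((h2c.comp ((continuous_const (y := a₀)).prodMk continuous_id)).intervalIntegrable 0 c)
      ((((h2.continuous_fderiv one_ne_zero).comp
        ((continuous_const (y := a₀)).prodMk continuous_id)).clm_apply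
        continuous_const).aestronglyMeasurable)
      (ae_of_all _ fun t _ a _ => hC _)
      intervalIntegrable_const
      (ae_of_all _ fun t _ a _ => hd2 a t)
    have h3 : (∫ t in (0:ℝ)..c, fderiv ℝ F2 (a₀, t) ((1:ℝ),(0:ℝ)))
        = F1 (a₀, c) - F1 (a₀, 0) := by
      rw [intervalIntegral.integral_congr (g := fun t => fderiv ℝ F1 (a₀, t) ((0:ℝ),(1:ℝ)))
        (fun t _ => (hcurl (a₀, t)).symm)]
      apply intervalIntegral.integral_eq_sub_of_hasDerivAt (fun t _ => hd1' a₀ t)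
      exact (((h1.continuous_fderiv one_ne_zero).comp
        ((continuous_const (y := a₀)).prodMk continuous_id)).clm_apply
        continuous_const).intervalIntegrable 0 c
    rw [← h3]
    exact key.2
  -- the potential
  set φ : ℝ × ℝ → ℝ := fun x => (∫ s in (0:ℝ)..x.1, F1 (s, 0)) + ∫ t in (0:ℝ)..x.2, F2 (x.1, t)
    with hφdef
  have hi1 : ∀ (c : ℝ) (a b : ℝ), IntervalIntegrable (fun s => F1 (s, c)) volume a b := fun c a b =>
    ((h1c.comp (continuous_id.prodMk continuous_const)).intervalIntegrable a b)
  have hi2 : ∀ (c : ℝ) (a b : ℝ), IntervalIntegrable (fun t => F2 (c, t)) volume a b := fun c a b =>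
    ((h2c.comp (continuous_const.prodMk continuous_id)).intervalIntegrable a b)
  have hkey : ∀ x y : ℝ × ℝ, φ y - φ x =
      (∫ t in x.2..y.2, F2 (y.1, t)) + ∫ s in x.1..y.1, F1 (s, x.2) := by
    intro x y
    have i1 : (∫ s in (0:ℝ)..y.1, F1 (s,0)) - ∫ s in (0:ℝ)..x.1, F1 (s,0)
        = ∫ s in x.1..y.1, F1 (s,0) :=
      intervalIntegral.integral_interval_sub_left (hi1 0 0 y.1) (hi1 0 0 x.1)
    have i2 : (∫ t in (0:ℝ)..y.2, F2 (y.1,t)) - ∫ t in (0:ℝ)..x.2, F2 (y.1,t)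
        = ∫ t in x.2..y.2, F2 (y.1,t) :=
      intervalIntegral.integral_interval_sub_left (hi2 y.1 0 y.2) (hi2 y.1 0 x.2)
    have i3 : (∫ t in (0:ℝ)..x.2, F2 (y.1,t)) - ∫ t in (0:ℝ)..x.2, F2 (x.1,t)
        = ∫ s in x.1..y.1, (F1 (s, x.2) - F1 (s, 0)) := by
      have := intervalIntegral.integral_eq_sub_of_hasDerivAt
        (f := fun a => ∫ t in (0:ℝ)..x.2, F2 (a,t))
        (f' := fun s => F1 (s, x.2) - F1 (s, 0)) (a := x.1) (b := y.1)
        (fun s _ => hW x.2 s)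
        (((h1c.comp (continuous_id.prodMk continuous_const)).sub
          ((h1c.comp (continuous_id.prodMk continuous_const)))).intervalIntegrable x.1 y.1)
      linarith [this]
    have i4 : (∫ s in x.1..y.1, (F1 (s, x.2) - F1 (s, 0)))
        = (∫ s in x.1..y.1, F1 (s, x.2)) - ∫ s in x.1..y.1, F1 (s,0) :=
      intervalIntegral.integral_sub (hi1 x.2 x.1 y.1) (hi1 0 x.1 y.1)
    simp only [hφdef]
    linarith [i1, i2, i3, i4]
  -- the candidate derivative
  set L : ℝ × ℝ → (ℝ × ℝ) →L[ℝ] ℝ := fun x =>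
    F1 x • (ContinuousLinearMap.fst ℝ ℝ ℝ) + F2 x • (ContinuousLinearMap.snd ℝ ℝ ℝ) with hLdef
  have hLval : ∀ (x : ℝ × ℝ) (h : ℝ × ℝ), L x h = F1 x * h.1 + F2 x * h.2 := by
    intro x h
    simp [hLdef, ContinuousLinearMap.smul_apply]
  have habs : ∀ {a b t : ℝ}, t ∈ Set.uIoc a b → |t - a| ≤ |b - a| := by
    intro a b t ht
    rcases Set.mem_uIoc.mp ht with ⟨ht1, ht2⟩ | ⟨ht1, ht2⟩ <;>
      rcases abs_cases (t - a) with ⟨e, _⟩ | ⟨e, _⟩ <;>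
      rcases abs_cases (b - a) with ⟨f, _⟩ | ⟨f, _⟩ <;> linarith
  have hfd : ∀ x : ℝ × ℝ, HasFDerivAt φ (L x) x := by
    intro x
    rw [hasFDerivAt_iff_isLittleO_nhds_zero, Asymptotics.isLittleO_iff]
    intro c hc
    obtain ⟨δ1, hδ1, hF1⟩ := Metric.continuousAt_iff.mp h1c.continuousAt (c/2) (by positivity)
    obtain ⟨δ2, hδ2, hF2⟩ := Metric.continuousAt_iff.mp h2c.continuousAt (c/2) (by positivity)
    have hδ : 0 < min δ1 δ2 := lt_min hδ1 hδ2
    filter_upwards [Metric.ball_mem_nhds (0 : ℝ × ℝ) hδ] with h hball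
    rw [Metric.mem_ball, dist_zero_right] at hball
    have hb1 : |h.1| < min δ1 δ2 := lt_of_le_of_lt (norm_fst_le h) hball
    have hb2 : |h.2| < min δ1 δ2 := lt_of_le_of_lt (norm_snd_le h) hball
    have hyx : (x + h).2 = x.2 + h.2 := rfl
    have hyx1 : (x + h).1 = x.1 + h.1 := rfl
    have herr : φ (x + h) - φ x - L x h =
        (∫ t in x.2..(x.2 + h.2), (F2 (x.1 + h.1, t) - F2 x))
          + ∫ s in x.1..(x.1 + h.1), (F1 (s, x.2) - F1 x) := by
      rw [hkey x (x + h), hLval]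
      simp only [hyx, hyx1]
      rw [intervalIntegral.integral_sub (hi2 (x.1 + h.1) x.2 (x.2 + h.2)) intervalIntegrable_const,
        intervalIntegral.integral_sub (hi1 x.2 x.1 (x.1 + h.1)) intervalIntegrable_const]
      simp only [intervalIntegral.integral_const, smul_eq_mul]
      ring
    rw [herr]
    have e2 : ‖∫ t in x.2..(x.2 + h.2), (F2 (x.1 + h.1, t) - F2 x)‖ ≤ (c/2) * |h.2| := by
      have hbound : ∀ t ∈ Set.uIoc x.2 (x.2 + h.2), ‖F2 (x.1 + h.1, t) - F2 x‖ ≤ c/2 := by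
        intro t ht
        have hdist : dist ((x.1 + h.1, t) : ℝ × ℝ) x < δ2 := by
          rw [Prod.dist_eq]
          apply max_lt
          · rw [Real.dist_eq]
            have he : x.1 + h.1 - x.1 = h.1 := by ring
            rw [he]
            exact lt_of_lt_of_le hb1 (min_le_right _ _)
          · rw [Real.dist_eq]
            have := habs ht
            have he : x.2 + h.2 - x.2 = h.2 := by ring
            rw [he] at this
            exact lt_of_le_of_lt this (lt_of_lt_of_le hb2 (min_le_right _ _))
        have := hF2 hdist
        rw [Real.dist_eq] at this
        simpa [Real.norm_eq_abs] using this.le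
      have := intervalIntegral.norm_integral_le_of_norm_le_const hbound
      calc _ ≤ (c/2) * |x.2 + h.2 - x.2| := this
        _ = (c/2) * |h.2| := by ring_nf
    have e1 : ‖∫ s in x.1..(x.1 + h.1), (F1 (s, x.2) - F1 x)‖ ≤ (c/2) * |h.1| := by
      have hbound : ∀ s ∈ Set.uIoc x.1 (x.1 + h.1), ‖F1 (s, x.2) - F1 x‖ ≤ c/2 := by
        intro s hst
        have hdist : dist ((s, x.2) : ℝ × ℝ) x < δ1 := by
          rw [Prod.dist_eq]
          apply max_lt
          · rw [Real.dist_eq]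
            have := habs hst
            have he : x.1 + h.1 - x.1 = h.1 := by ring
            rw [he] at this
            exact lt_of_le_of_lt this (lt_of_lt_of_le hb1 (min_le_left _ _))
          · rw [Real.dist_eq]
            simpa using hδ1
        have := hF1 hdist
        rw [Real.dist_eq] at this
        simpa [Real.norm_eq_abs] using this.le
      have := intervalIntegral.norm_integral_le_of_norm_le_const hbound
      calc _ ≤ (c/2) * |x.1 + h.1 - x.1| := this
        _ = (c/2) * |h.1| := by ring_nf
    calc ‖(∫ t in x.2..(x.2 + h.2), (F2 (x.1 + h.1, t) - F2 x))
          + ∫ s in x.1..(x.1 + h.1), (F1 (s, x.2) - F1 x)‖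
        ≤ ‖∫ t in x.2..(x.2 + h.2), (F2 (x.1 + h.1, t) - F2 x)‖
          + ‖∫ s in x.1..(x.1 + h.1), (F1 (s, x.2) - F1 x)‖ := norm_add_le _ _
      _ ≤ (c/2) * |h.2| + (c/2) * |h.1| := add_le_add e2 e1
      _ ≤ (c/2) * ‖h‖ + (c/2) * ‖h‖ := by
          have := norm_fst_le h; have := norm_snd_le h
          gcongr <;> simpa [Real.norm_eq_abs] using ‹_›
      _ = c * ‖h‖ := by ring
  have hfdφ : ∀ x, fderiv ℝ φ x = L x := fun x => (hfd x).fderiv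
  refine ⟨φ, ?_, ?_⟩
  · rw [contDiff_one_iff_fderiv]
    refine ⟨fun x => (hfd x).differentiableAt, ?_⟩
    rw [funext hfdφ]
    exact (h1c.smul continuous_const).add (h2c.smul continuous_const)
  · intro x
    rw [hfdφ x, hLval, hLval]
    constructor <;> ring

end Potential

lemma Xbeam_const_mul (c : ℝ) (w : ℝ × ℝ) (h : ℝ × ℝ → ℝ) (x : ℝ × ℝ) :
    Xbeam w (fun y => c * h y) x = c * Xbeam w h x := by
  simp only [Xbeam]
  exact MeasureTheory.integral_const_mul c _
/-- kernel description of the mixed V-line transform. -/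
theorem kernel_mixed
    (u1 u2 : ℝ) (hu : u1 ^ 2 + u2 ^ 2 = 1) (hu1 : 0 < u1) (hu2 : 0 < u2)
    (f11 f12 f22 : ℝ × ℝ → ℝ)
    (h11 : ContDiff ℝ 2 f11) (h12 : ContDiff ℝ 2 f12) (h22 : ContDiff ℝ 2 f22)
    (s11 : SuppInDisc f11) (s12 : SuppInDisc f12) (s22 : SuppInDisc f22) :
    (∀ x : ℝ × ℝ, VlineM u1 u2 f11 f12 f22 x = 0) ↔
      ∃ φ : ℝ × ℝ → ℝ, ContDiff ℝ 1 φ ∧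
        ∀ x : ℝ × ℝ,
          fderiv ℝ φ x ((1 : ℝ), (0 : ℝ)) = (u1 ^ 2 - u2 ^ 2) * f12 x ∧
          fderiv ℝ φ x ((0 : ℝ), (1 : ℝ)) = -(u1 ^ 2) * (f11 x - f22 x) := by
  have hu1ne : u1 ≠ 0 := ne_of_gt hu1
  have hu2ne : u2 ≠ 0 := ne_of_gt hu2
  have h11' : ContDiff ℝ 1 f11 := h11.of_le (by norm_num)
  have h12' : ContDiff ℝ 1 f12 := h12.of_le (by norm_num)
  have h22' : ContDiff ℝ 1 f22 := h22.of_le (by norm_num)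
  have d11 : Differentiable ℝ f11 := h11'.differentiable one_ne_zero
  have d12 : Differentiable ℝ f12 := h12'.differentiable one_ne_zero
  have d22 : Differentiable ℝ f22 := h22'.differentiable one_ne_zero
  -- directional linearity of fderiv
  have hlin : ∀ (f : ℝ × ℝ → ℝ) (y : ℝ × ℝ) (a b : ℝ),
      fderiv ℝ f y ((a : ℝ), (b : ℝ)) = a * fderiv ℝ f y ((1:ℝ),(0:ℝ))
        + b * fderiv ℝ f y ((0:ℝ),(1:ℝ)) := by
    intro f y a b
    have hsp : ((a, b) : ℝ × ℝ) = a • ((1:ℝ),(0:ℝ)) + b • ((0:ℝ),(1:ℝ)) := by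
      simp [Prod.ext_iff]
    rw [hsp, (fderiv ℝ f y).map_add, (fderiv ℝ f y).map_smul, (fderiv ℝ f y).map_smul]
    simp
  -- the vector field
  have hF1cd : ContDiff ℝ 1 (fun y => (u1 ^ 2 - u2 ^ 2) * f12 y) := contDiff_const.mul h12'
  have hF2cd : ContDiff ℝ 1 (fun y => -(u1 ^ 2) * (f11 y - f22 y)) :=
    contDiff_const.mul (h11'.sub h22')
  have hF1fd : ∀ (y : ℝ × ℝ) (w : ℝ × ℝ), fderiv ℝ (fun y => (u1 ^ 2 - u2 ^ 2) * f12 y) y w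
      = (u1 ^ 2 - u2 ^ 2) * fderiv ℝ f12 y w := by
    intro y w
    rw [fderiv_const_mul (d12 y)]
    simp
  have hF2fd : ∀ (y : ℝ × ℝ) (w : ℝ × ℝ), fderiv ℝ (fun y => -(u1 ^ 2) * (f11 y - f22 y)) y w
      = -(u1 ^ 2) * (fderiv ℝ f11 y w - fderiv ℝ f22 y w) := by
    intro y w
    rw [fderiv_const_mul (a := fun y => f11 y - f22 y) ((d11 y).sub (d22 y)), fderiv_fun_sub (d11 y) (d22 y)]
    simp
  -- the two beam integrands
  have hgucd : ContDiff ℝ 1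
      (fun y => -(u1 * u2) * f11 y + (u1 ^ 2 - u2 ^ 2) * f12 y + u1 * u2 * f22 y) :=
    ((contDiff_const.mul h11').add (contDiff_const.mul h12')).add (contDiff_const.mul h22')
  have hgvcd : ContDiff ℝ 1
      (fun y => u1 * u2 * f11 y + (u1 ^ 2 - u2 ^ 2) * f12 y - u1 * u2 * f22 y) :=
    ((contDiff_const.mul h11').add (contDiff_const.mul h12')).sub (contDiff_const.mul h22')
  have hsuppgu : SuppInDisc
      (fun y => -(u1 * u2) * f11 y + (u1 ^ 2 - u2 ^ 2) * f12 y + u1 * u2 * f22 y) := by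
    intro y hy
    beta_reduce
    rw [s11 y hy, s12 y hy, s22 y hy]
    ring
  have hsuppgv : SuppInDisc
      (fun y => u1 * u2 * f11 y + (u1 ^ 2 - u2 ^ 2) * f12 y - u1 * u2 * f22 y) := by
    intro y hy
    beta_reduce
    rw [s11 y hy, s12 y hy, s22 y hy]
    ring
  have hgufd : ∀ (y : ℝ × ℝ) (w : ℝ × ℝ),
      fderiv ℝ (fun y => -(u1 * u2) * f11 y + (u1 ^ 2 - u2 ^ 2) * f12 y + u1 * u2 * f22 y) y w
        = -(u1 * u2) * fderiv ℝ f11 y w + (u1 ^ 2 - u2 ^ 2) * fderiv ℝ f12 y w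
          + u1 * u2 * fderiv ℝ f22 y w := by
    intro y w
    have H : HasFDerivAt
        (fun y => -(u1 * u2) * f11 y + (u1 ^ 2 - u2 ^ 2) * f12 y + u1 * u2 * f22 y)
        ((-(u1 * u2) • fderiv ℝ f11 y + (u1 ^ 2 - u2 ^ 2) • fderiv ℝ f12 y)
          + (u1 * u2) • fderiv ℝ f22 y) y :=
      (((d11 y).hasFDerivAt.const_mul (-(u1 * u2))).add
        ((d12 y).hasFDerivAt.const_mul (u1 ^ 2 - u2 ^ 2))).add
        ((d22 y).hasFDerivAt.const_mul (u1 * u2))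
    rw [H.fderiv]
    simp [ContinuousLinearMap.add_apply]
    try ring
  have hgvfd : ∀ (y : ℝ × ℝ) (w : ℝ × ℝ),
      fderiv ℝ (fun y => u1 * u2 * f11 y + (u1 ^ 2 - u2 ^ 2) * f12 y - u1 * u2 * f22 y) y w
        = u1 * u2 * fderiv ℝ f11 y w + (u1 ^ 2 - u2 ^ 2) * fderiv ℝ f12 y w
          - u1 * u2 * fderiv ℝ f22 y w := by
    intro y w
    have H : HasFDerivAt
        (fun y => u1 * u2 * f11 y + (u1 ^ 2 - u2 ^ 2) * f12 y - u1 * u2 * f22 y)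
        (((u1 * u2) • fderiv ℝ f11 y + (u1 ^ 2 - u2 ^ 2) • fderiv ℝ f12 y)
          - (u1 * u2) • fderiv ℝ f22 y) y :=
      (((d11 y).hasFDerivAt.const_mul (u1 * u2)).add
        ((d12 y).hasFDerivAt.const_mul (u1 ^ 2 - u2 ^ 2))).sub
        ((d22 y).hasFDerivAt.const_mul (u1 * u2))
    rw [H.fderiv]
    simp [ContinuousLinearMap.add_apply, ContinuousLinearMap.sub_apply]
    try ring
  constructor
  · -- forward direction
    intro hM
    have hzero : ∀ x : ℝ × ℝ,
        Xbeam (u1, u2) (fun y => -(u1 * u2) * f11 y + (u1 ^ 2 - u2 ^ 2) * f12 y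
            + u1 * u2 * f22 y) x
          + Xbeam (-u1, u2) (fun y => u1 * u2 * f11 y + (u1 ^ 2 - u2 ^ 2) * f12 y
            - u1 * u2 * f22 y) x = 0 := by
      intro x
      have := hM x
      simpa [VlineM, Pi.add_apply] using this
    have hcurl : ∀ y : ℝ × ℝ, fderiv ℝ (fun y => (u1 ^ 2 - u2 ^ 2) * f12 y) y ((0:ℝ),(1:ℝ))
        = fderiv ℝ (fun y => -(u1 ^ 2) * (f11 y - f22 y)) y ((1:ℝ),(0:ℝ)) := by
      intro y
      have hsurj : ∃ a b : ℝ, a • ((u1, u2) : ℝ × ℝ) + b • ((-u1, u2) : ℝ × ℝ) = y := by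
        refine ⟨(y.1/u1 + y.2/u2)/2, (y.2/u2 - y.1/u1)/2, ?_⟩
        apply Prod.ext <;> simp [Prod.smul_def, smul_eq_mul] <;> field_simp <;> ring
      have hkey := curl_from_zero (u := ((u1, u2) : ℝ × ℝ)) (v := ((-u1, u2) : ℝ × ℝ))
        hu2 hu2 hgucd hgvcd hsuppgu hsuppgv hzero y hsurj
      rw [hgufd, hgvfd, hlin f11 y (-u1) u2, hlin f12 y (-u1) u2, hlin f22 y (-u1) u2,
        hlin f11 y u1 u2, hlin f12 y u1 u2, hlin f22 y u1 u2] at hkey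
      have hkey2 : (u1 ^ 2 - u2 ^ 2) * fderiv ℝ f12 y ((0:ℝ),(1:ℝ))
          + u1 ^ 2 * fderiv ℝ f11 y ((1:ℝ),(0:ℝ))
          - u1 ^ 2 * fderiv ℝ f22 y ((1:ℝ),(0:ℝ)) = 0 := by
        have h2u2 : (2:ℝ) * u2 ≠ 0 := mul_ne_zero two_ne_zero hu2ne
        apply mul_left_cancel₀ h2u2
        rw [mul_zero]
        linear_combination hkey
      rw [hF1fd, hF2fd]
      linarith [hkey2]
    have hsuppF2 : SuppInDisc (fun y => -(u1 ^ 2) * (f11 y - f22 y)) := by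
      intro y hy
      beta_reduce
      rw [s11 y hy, s22 y hy]
      ring
    obtain ⟨φ, hφ1, hφ2⟩ := exists_potential hF1cd hF2cd
      (exists_dirderiv_bound hF2cd (suppInDisc_hasCompactSupport hsuppF2) ((1:ℝ),(0:ℝ)))
      hcurl
    exact ⟨φ, hφ1, fun x => ⟨(hφ2 x).1, (hφ2 x).2⟩⟩
  · -- backward direction
    rintro ⟨φ, hφ1, hφ2⟩ x
    have hgrad1 : ∀ y : ℝ × ℝ, fderiv ℝ φ y ((1:ℝ),(0:ℝ)) = (u1 ^ 2 - u2 ^ 2) * f12 y :=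
      fun y => (hφ2 y).1
    have hgrad2 : ∀ y : ℝ × ℝ, fderiv ℝ φ y ((0:ℝ),(1:ℝ)) = -(u1 ^ 2) * (f11 y - f22 y) :=
      fun y => (hφ2 y).2
    have hgu_eq : ∀ y : ℝ × ℝ,
        -(u1 * u2) * f11 y + (u1 ^ 2 - u2 ^ 2) * f12 y + u1 * u2 * f22 y
          = (1/u1) * fderiv ℝ φ y ((u1 : ℝ), (u2 : ℝ)) := by
      intro y
      rw [hlin φ y u1 u2, hgrad1, hgrad2]
      field_simp
      ring
    have hgv_eq : ∀ y : ℝ × ℝ,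
        u1 * u2 * f11 y + (u1 ^ 2 - u2 ^ 2) * f12 y - u1 * u2 * f22 y
          = -(1/u1) * fderiv ℝ φ y ((-u1 : ℝ), (u2 : ℝ)) := by
      intro y
      rw [hlin φ y (-u1) u2, hgrad1, hgrad2]
      field_simp
      ring
    have hsuppu : SuppInDisc (fun y => fderiv ℝ φ y ((u1 : ℝ), (u2 : ℝ))) := by
      intro y hy
      beta_reduce
      rw [hlin φ y u1 u2, hgrad1, hgrad2, s11 y hy, s12 y hy, s22 y hy]
      ring
    have hsuppv : SuppInDisc (fun y => fderiv ℝ φ y ((-u1 : ℝ), (u2 : ℝ))) := by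
      intro y hy
      beta_reduce
      rw [hlin φ y (-u1) u2, hgrad1, hgrad2, s11 y hy, s12 y hy, s22 y hy]
      ring
    set C : ℝ := max ((1 - x.2)/u2) 0 with hCdef
    have hC0 : (0:ℝ) ≤ C := le_max_right _ _
    have hCT : (1 - x.2)/u2 ≤ C := le_max_left _ _
    have hXu : Xbeam (u1, u2) (fun y => fderiv ℝ φ y ((u1 : ℝ), (u2 : ℝ))) x
        = φ (x + C • ((u1, u2) : ℝ × ℝ)) - φ x :=
      Xbeam_grad hφ1 hu2 hsuppu x hC0 hCT
    have hXv : Xbeam (-u1, u2) (fun y => fderiv ℝ φ y ((-u1 : ℝ), (u2 : ℝ))) x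
        = φ (x + C • ((-u1, u2) : ℝ × ℝ)) - φ x :=
      Xbeam_grad hφ1 hu2 hsuppv x hC0 hCT
    -- the two endpoints are joined by a horizontal segment above the disc
    have hy2 : (1:ℝ) ≤ x.2 + C * u2 := by
      have := (div_le_iff₀ hu2).mp hCT
      linarith
    have heq : φ (x + C • ((u1, u2) : ℝ × ℝ)) = φ (x + C • ((-u1, u2) : ℝ × ℝ)) := by
      have hder : ∀ s : ℝ, HasDerivAt (fun s : ℝ => φ ((s, x.2 + C * u2) : ℝ × ℝ)) 0 s := by
        intro s
        have h1 : HasDerivAt (fun s : ℝ => ((s, x.2 + C * u2) : ℝ × ℝ)) ((1:ℝ),(0:ℝ)) s := by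
          have := ((hasDerivAt_id s).smul_const (((1:ℝ),(0:ℝ)) : ℝ × ℝ)).const_add
            (((0:ℝ), x.2 + C * u2) : ℝ × ℝ)
          simp only [one_smul] at this
          apply this.congr_of_eventuallyEq
          filter_upwards with b
          simp [Prod.ext_iff]
        have h2 := ((hφ1.differentiable one_ne_zero) _).hasFDerivAt.comp_hasDerivAt s h1
        have h3 : fderiv ℝ φ ((s, x.2 + C * u2) : ℝ × ℝ) ((1:ℝ),(0:ℝ)) = 0 := by
          rw [hgrad1, s12 _ (by simpa using (by nlinarith [sq_nonneg s] :
            (1:ℝ) ≤ s ^ 2 + (x.2 + C * u2) ^ 2))]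
          ring
        rw [h3] at h2
        exact h2
      have hftc := intervalIntegral.integral_eq_sub_of_hasDerivAt
        (f := fun s : ℝ => φ ((s, x.2 + C * u2) : ℝ × ℝ)) (f' := fun _ => (0:ℝ))
        (a := x.1 + C * (-u1)) (b := x.1 + C * u1) (fun s _ => hder s)
        intervalIntegrable_const
      rw [intervalIntegral.integral_zero] at hftc
      have e1 : x + C • ((u1, u2) : ℝ × ℝ) = ((x.1 + C * u1, x.2 + C * u2) : ℝ × ℝ) := rfl
      have e2 : x + C • ((-u1, u2) : ℝ × ℝ) = ((x.1 + C * (-u1), x.2 + C * u2) : ℝ × ℝ) := rfl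
      rw [e1, e2]
      have := hftc.symm
      linarith [this]
    show Xbeam (u1, u2) (fun y => -(u1 * u2) * f11 y + (u1 ^ 2 - u2 ^ 2) * f12 y
        + u1 * u2 * f22 y) x
      + Xbeam (-u1, u2) (fun y => u1 * u2 * f11 y + (u1 ^ 2 - u2 ^ 2) * f12 y
        - u1 * u2 * f22 y) x = 0
    rw [show (fun y => -(u1 * u2) * f11 y + (u1 ^ 2 - u2 ^ 2) * f12 y + u1 * u2 * f22 y)
        = fun y => (1/u1) * fderiv ℝ φ y ((u1 : ℝ), (u2 : ℝ)) from funext hgu_eq,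
      show (fun y => u1 * u2 * f11 y + (u1 ^ 2 - u2 ^ 2) * f12 y - u1 * u2 * f22 y)
        = fun y => -(1/u1) * fderiv ℝ φ y ((-u1 : ℝ), (u2 : ℝ)) from funext hgv_eq,
      Xbeam_const_mul, Xbeam_const_mul, hXu, hXv, heq]
    ring
end
end

section
/- Let g = (g1, g2) be a vector field on ℝ² whose components are twice continuously differentiable and compactly supported, and let f = d g be the symmetric 2-tensor field with components f11 = ∂g1/∂x1, f12 = (1/2)(∂g1/∂x2 + ∂g2/∂x1), f22 = ∂g2/∂x2. Then for every x ∈ ℝ²: Lf(x) = −2 u2 g2(x), and Mf(x) = 2 u2 g1(x) − (1/2)[X_u(∂g2/∂x1 − ∂g1/∂x2)(x) + X_v(∂g2/∂x1 − ∂g1/∂x2)(x)]. -/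
noncomputable section

open MeasureTheory

open Filter Topology


lemma ray_support_bound (w x : ℝ × ℝ) (hw : w ≠ 0) (h : ℝ × ℝ → ℝ)
    (hc : HasCompactSupport h) :
    ∃ M : ℝ, 0 < M ∧ ∀ t : ℝ, M < |t| → h (x + t • w) = 0 := by
  obtain ⟨R, hR⟩ := hc.isBounded.subset_closedBall 0
  have hw' : 0 < ‖w‖ := norm_pos_iff.2 hw
  refine ⟨(|R| + ‖x‖) / ‖w‖ + 1, by positivity, fun t ht => ?_⟩
  by_contra hne
  have hmem : x + t • w ∈ tsupport h := subset_tsupport h hne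
  have hball := hR hmem
  rw [Metric.mem_closedBall, dist_zero_right] at hball
  have h1 : ‖t • w‖ ≤ |R| + ‖x‖ := by
    calc ‖t • w‖ = ‖(x + t • w) - x‖ := by ring_nf
    _ ≤ ‖x + t • w‖ + ‖x‖ := norm_sub_le _ _
    _ ≤ |R| + ‖x‖ := by have := le_abs_self R; linarith
  rw [norm_smul, Real.norm_eq_abs] at h1
  have : |t| ≤ (|R| + ‖x‖) / ‖w‖ := (le_div_iff₀ hw').2 h1
  linarith

lemma ray_hcs (w x : ℝ × ℝ) (hw : w ≠ 0) (h : ℝ × ℝ → ℝ)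
    (hc : HasCompactSupport h) :
    HasCompactSupport (fun t : ℝ => h (x + t • w)) := by
  obtain ⟨M, hM, hzero⟩ := ray_support_bound w x hw h hc
  apply HasCompactSupport.intro (isCompact_Icc (a := -M) (b := M))
  intro t ht
  simp only [Set.mem_Icc, not_and_or, not_le] at ht
  exact hzero t (by cases ht with
    | inl h' => rw [abs_of_neg (by linarith)]; linarith
    | inr h' => rw [abs_of_pos (by linarith)]; linarith)

lemma ray_integrableOn (w x : ℝ × ℝ) (hw : w ≠ 0) (h : ℝ × ℝ → ℝ)
    (hcont : Continuous h) (hc : HasCompactSupport h) :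
    IntegrableOn (fun t : ℝ => h (x + t • w)) (Set.Ioi 0) := by
  have : Continuous (fun t : ℝ => h (x + t • w)) := by fun_prop
  exact (this.integrable_of_hasCompactSupport (ray_hcs w x hw h hc)).integrableOn

lemma fderiv_apply_hcs (h : ℝ × ℝ → ℝ) (hc : HasCompactSupport h) (w : ℝ × ℝ) :
    HasCompactSupport (fun y => fderiv ℝ h y w) :=
  (hc.fderiv ℝ).comp_left (g := fun L : ℝ × ℝ →L[ℝ] ℝ => L w) rfl

lemma fderiv_apply_cont (h : ℝ × ℝ → ℝ) (hh : ContDiff ℝ 1 h) (w : ℝ × ℝ) :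
    Continuous (fun y => fderiv ℝ h y w) :=
  (hh.continuous_fderiv_apply one_ne_zero).comp (continuous_id.prodMk continuous_const)

set_option maxHeartbeats 1000000 in
lemma key_FTC (w : ℝ × ℝ) (hw : w ≠ 0) (h : ℝ × ℝ → ℝ)
    (hh : ContDiff ℝ 1 h) (hc : HasCompactSupport h) (x : ℝ × ℝ) :
    (∫ t in Set.Ioi (0:ℝ), fderiv ℝ h (x + t • w) w) = -(h x) := by
  have hdiff : Differentiable ℝ h := hh.differentiable one_ne_zero
  have hder : ∀ t ∈ Set.Ici (0:ℝ), HasDerivAt (fun t : ℝ => h (x + t • w))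
      (fderiv ℝ h (x + t • w) w) t := by
    intro t _
    have h1 : HasDerivAt (fun t : ℝ => x + t • w) w t := by
      simpa using ((hasDerivAt_id t).smul_const w).const_add x
    exact ((hdiff (x + t • w)).hasFDerivAt.comp_hasDerivAt t h1)
  have hint : IntegrableOn (fun t : ℝ => fderiv ℝ h (x + t • w) w) (Set.Ioi 0) :=
    ray_integrableOn w x hw _ (fderiv_apply_cont h hh w) (fderiv_apply_hcs h hc w)
  have htend : Tendsto (fun t : ℝ => h (x + t • w)) atTop (𝓝 0) := by
    obtain ⟨M, hM, hzero⟩ := ray_support_bound w x hw h hc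
    apply tendsto_const_nhds.congr'
    filter_upwards [eventually_gt_atTop M] with t ht
    exact (hzero t (by rw [abs_of_pos (by linarith)]; exact ht)).symm
  have := integral_Ioi_of_hasDerivAt_of_tendsto' hder hint htend
  simpa using this

lemma fderiv_eval_pair (g : ℝ × ℝ → ℝ) (y : ℝ × ℝ) (a b : ℝ) :
    fderiv ℝ g y (a, b) = a * fderiv ℝ g y (1, 0) + b * fderiv ℝ g y (0, 1) := by
  have hab : (a, b) = a • ((1:ℝ), (0:ℝ)) + b • ((0:ℝ), (1:ℝ)) := by simp
  rw [hab, map_add, ContinuousLinearMap.map_smul, ContinuousLinearMap.map_smul, smul_eq_mul, smul_eq_mul]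

lemma fderiv_lincomb (a b : ℝ) (g1 g2 : ℝ × ℝ → ℝ)
    (hg1 : Differentiable ℝ g1) (hg2 : Differentiable ℝ g2) (y w : ℝ × ℝ) :
    fderiv ℝ (fun z => a * g1 z + b * g2 z) y w
      = a * fderiv ℝ g1 y w + b * fderiv ℝ g2 y w := by
  rw [fderiv_fun_add ((hg1 y).const_mul a) ((hg2 y).const_mul b),
    fderiv_const_mul (hg1 y) a, fderiv_const_mul (hg2 y) b]
  simp

lemma hcs_comb (a b : ℝ) (g1 g2 : ℝ × ℝ → ℝ) (hc1 : HasCompactSupport g1)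
    (hc2 : HasCompactSupport g2) :
    HasCompactSupport (fun z => a * g1 z + b * g2 z) :=
  (hc1.mul_left).add (hc2.mul_left)

lemma cd_comb (a b : ℝ) (g1 g2 : ℝ × ℝ → ℝ) (h1 : ContDiff ℝ 1 g1) (h2 : ContDiff ℝ 1 g2) :
    ContDiff ℝ 1 (fun z => a * g1 z + b * g2 z) :=
  (contDiff_const.mul h1).add (contDiff_const.mul h2)

set_option maxHeartbeats 2000000 in
/-- the longitudinal and mixed V-line transforms of a potential
tensor field `f = d g`. -/
theorem potential_field_L_and_M
    (u1 u2 : ℝ) (hu : u1 ^ 2 + u2 ^ 2 = 1) (hu1 : 0 < u1) (hu2 : 0 < u2)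
    (g1 g2 : ℝ × ℝ → ℝ)
    (hg1 : ContDiff ℝ 2 g1) (hg2 : ContDiff ℝ 2 g2)
    (hc1 : HasCompactSupport g1) (hc2 : HasCompactSupport g2)
    (f11 f12 f22 : ℝ × ℝ → ℝ)
    (hf11 : ∀ y : ℝ × ℝ, f11 y = fderiv ℝ g1 y ((1 : ℝ), (0 : ℝ)))
    (hf12 : ∀ y : ℝ × ℝ, f12 y =
      (1 / 2) * (fderiv ℝ g1 y ((0 : ℝ), (1 : ℝ)) + fderiv ℝ g2 y ((1 : ℝ), (0 : ℝ))))
    (hf22 : ∀ y : ℝ × ℝ, f22 y = fderiv ℝ g2 y ((0 : ℝ), (1 : ℝ)))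
    (x : ℝ × ℝ) :
    VlineL u1 u2 f11 f12 f22 x = -(2 * u2) * g2 x ∧
    VlineM u1 u2 f11 f12 f22 x =
      2 * u2 * g1 x -
        (1 / 2) *
          (Xbeam (u1, u2)
              (fun y => fderiv ℝ g2 y ((1 : ℝ), (0 : ℝ)) - fderiv ℝ g1 y ((0 : ℝ), (1 : ℝ))) x +
            Xbeam (-u1, u2)
              (fun y => fderiv ℝ g2 y ((1 : ℝ), (0 : ℝ)) - fderiv ℝ g1 y ((0 : ℝ), (1 : ℝ))) x) := by
  have hg1' : ContDiff ℝ 1 g1 := hg1.of_le (by norm_num)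
  have hg2' : ContDiff ℝ 1 g2 := hg2.of_le (by norm_num)
  have hd1 : Differentiable ℝ g1 := hg1'.differentiable one_ne_zero
  have hd2 : Differentiable ℝ g2 := hg2'.differentiable one_ne_zero
  have hdu : ((u1, u2) : ℝ × ℝ) ≠ 0 := by
    intro h; rw [Prod.mk_eq_zero] at h; simp_all
  have hdv : ((-u1, u2) : ℝ × ℝ) ≠ 0 := by
    intro h; rw [Prod.mk_eq_zero] at h; simp_all
  set du : ℝ × ℝ := (u1, u2) with hdu_def
  set dv : ℝ × ℝ := (-u1, u2) with hdv_def
  -- curl term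
  set curl : ℝ × ℝ → ℝ := fun y => fderiv ℝ g2 y (1, 0) - fderiv ℝ g1 y (0, 1) with hcurl
  have hcurl_cont : Continuous curl :=
    (fderiv_apply_cont g2 hg2' _).sub (fderiv_apply_cont g1 hg1' _)
  have hcurl_hcs : HasCompactSupport curl := by
    have h2' := (fderiv_apply_hcs g2 hc2 ((1:ℝ),(0:ℝ))).add
      ((fderiv_apply_hcs g1 hc1 ((0:ℝ),(1:ℝ))).neg)
    simpa [curl, sub_eq_add_neg, Pi.add_def, Pi.neg_def] using h2' 
  -- generic combination lemma
  have keyC : ∀ (a b : ℝ) (w : ℝ × ℝ), w ≠ 0 →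
      (∫ t in Set.Ioi (0:ℝ), fderiv ℝ (fun z => a * g1 z + b * g2 z) (x + t • w) w)
        = -(a * g1 x + b * g2 x) := by
    intro a b w hw
    exact key_FTC w hw _ (cd_comb a b g1 g2 hg1' hg2') (hcs_comb a b g1 g2 hc1 hc2) x
  have hintC : ∀ (a b : ℝ) (w w' : ℝ × ℝ), w ≠ 0 →
      IntegrableOn (fun t : ℝ =>
        fderiv ℝ (fun z => a * g1 z + b * g2 z) (x + t • w) w') (Set.Ioi 0) := by
    intro a b w w' hw
    exact ray_integrableOn w x hw _
      (fderiv_apply_cont _ (cd_comb a b g1 g2 hg1' hg2') w')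
      (fderiv_apply_hcs _ (hcs_comb a b g1 g2 hc1 hc2) w')
  constructor
  · -- longitudinal part
    have e1 : ∀ y : ℝ × ℝ, u1 ^ 2 * f11 y + 2 * u1 * u2 * f12 y + u2 ^ 2 * f22 y
        = fderiv ℝ (fun z => u1 * g1 z + u2 * g2 z) y du := by
      intro y
      rw [hf11, hf12, hf22, fderiv_lincomb u1 u2 g1 g2 hd1 hd2 y du,
        hdu_def, fderiv_eval_pair g1 y u1 u2, fderiv_eval_pair g2 y u1 u2]
      ring
    have e2 : ∀ y : ℝ × ℝ, u1 ^ 2 * f11 y - 2 * u1 * u2 * f12 y + u2 ^ 2 * f22 y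
        = fderiv ℝ (fun z => -u1 * g1 z + u2 * g2 z) y dv := by
      intro y
      rw [hf11, hf12, hf22, fderiv_lincomb (-u1) u2 g1 g2 hd1 hd2 y dv,
        hdv_def, fderiv_eval_pair g1 y (-u1) u2, fderiv_eval_pair g2 y (-u1) u2]
      ring
    have t1 : Xbeam du (fun y => u1 ^ 2 * f11 y + 2 * u1 * u2 * f12 y + u2 ^ 2 * f22 y) x
        = -(u1 * g1 x + u2 * g2 x) := by
      rw [Xbeam]
      simp only [e1]
      exact keyC u1 u2 du hdu
    have t2 : Xbeam dv (fun y => u1 ^ 2 * f11 y - 2 * u1 * u2 * f12 y + u2 ^ 2 * f22 y) x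
        = -(-u1 * g1 x + u2 * g2 x) := by
      rw [Xbeam]
      simp only [e2]
      exact keyC (-u1) u2 dv hdv
    show Xbeam du _ x + Xbeam dv _ x = _
    rw [t1, t2]; ring
  · -- mixed part
    have e1 : ∀ y : ℝ × ℝ, -(u1 * u2) * f11 y + (u1 ^ 2 - u2 ^ 2) * f12 y + u1 * u2 * f22 y
        = fderiv ℝ (fun z => -u2 * g1 z + u1 * g2 z) y du - (1/2) * curl y := by
      intro y
      rw [hf11, hf12, hf22, fderiv_lincomb (-u2) u1 g1 g2 hd1 hd2 y du, hcurl,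
        hdu_def, fderiv_eval_pair g1 y u1 u2, fderiv_eval_pair g2 y u1 u2]
      linear_combination ((1/2) * ((fderiv ℝ g1 y (0, 1) : ℝ) - fderiv ℝ g2 y (1, 0))) * hu
    have e2 : ∀ y : ℝ × ℝ, u1 * u2 * f11 y + (u1 ^ 2 - u2 ^ 2) * f12 y - u1 * u2 * f22 y
        = fderiv ℝ (fun z => -u2 * g1 z + -u1 * g2 z) y dv - (1/2) * curl y := by
      intro y
      rw [hf11, hf12, hf22, fderiv_lincomb (-u2) (-u1) g1 g2 hd1 hd2 y dv, hcurl,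
        hdv_def, fderiv_eval_pair g1 y (-u1) u2, fderiv_eval_pair g2 y (-u1) u2]
      linear_combination ((1/2) * ((fderiv ℝ g1 y (0, 1) : ℝ) - fderiv ℝ g2 y (1, 0))) * hu
    have hcurl_int : ∀ (w : ℝ × ℝ), w ≠ 0 →
        IntegrableOn (fun t : ℝ => (1/2) * curl (x + t • w)) (Set.Ioi 0) := by
      intro w hw
      exact ((ray_integrableOn w x hw curl hcurl_cont hcurl_hcs).const_mul _)
    have t1 : Xbeam du
        (fun y => -(u1 * u2) * f11 y + (u1 ^ 2 - u2 ^ 2) * f12 y + u1 * u2 * f22 y) x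
        = -(-u2 * g1 x + u1 * g2 x) - (1/2) * Xbeam du curl x := by
      rw [Xbeam]
      simp only [e1]
      rw [integral_sub (hintC (-u2) u1 du du hdu) (hcurl_int du hdu),
        keyC (-u2) u1 du hdu, MeasureTheory.integral_const_mul, Xbeam]
    have t2 : Xbeam dv
        (fun y => u1 * u2 * f11 y + (u1 ^ 2 - u2 ^ 2) * f12 y - u1 * u2 * f22 y) x
        = -(-u2 * g1 x + -u1 * g2 x) - (1/2) * Xbeam dv curl x := by
      rw [Xbeam]
      simp only [e2]
      rw [integral_sub (hintC (-u2) (-u1) dv dv hdv) (hcurl_int dv hdv),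
        keyC (-u2) (-u1) dv hdv, MeasureTheory.integral_const_mul, Xbeam]
    show Xbeam du _ x + Xbeam dv _ x = _
    rw [t1, t2, hcurl]; ring
end
end
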